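/- Let X be a tree. The hyperspace NC*(X) is connected if and only if X is homeomorphic to the interval [0,1]. -/

import Mathlib

open TopologicalSpace Topology Metric Set

universe u
variable {X : Type u}

noncomputable def ptOrder [TopologicalSpace X] (p : X) : Cardinal :=
  Cardinal.mk (ConnectedComponents (({p}ᶜ : Set X)))

def endpoints (X : Type u) [TopologicalSpace X] : Set X := {p | ptOrder p = 1}

def ramificationPoints (X : Type u) [TopologicalSpace X] : Set X := {p | 3 ≤ ptOrder p}

def IsSubcontinuum [TopologicalSpace X] (A : Set X) : Prop := IsClosed A ∧ IsConnected A

def NoSimpleClosedCurve (X : Type u) [TopologicalSpace X] : Prop :=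
  ¬ ∃ f : AddCircle (1 : ℝ) → X, IsEmbedding f

def NCstar (X : Type u) [MetricSpace X] : Set (NonemptyCompacts X) :=
  {A | IsConnected (A : Set X) ∧ IsPreconnected ((A : Set X)ᶜ)}

def IsArc [TopologicalSpace X] (A : Set X) (x y : X) : Prop :=
  ∃ f : Set.Icc (0 : ℝ) 1 → X, IsEmbedding f ∧ Set.range f = A ∧
    f ⟨0, by norm_num⟩ = x ∧ f ⟨1, by norm_num⟩ = y

def IsFiniteGraph (X : Type u) [TopologicalSpace X] : Prop :=
  ∃ (n : ℕ) (A : Fin n → Set X) (e₀ e₁ : Fin n → X),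
    (∀ i, IsArc (A i) (e₀ i) (e₁ i)) ∧ (⋃ i, A i) = Set.univ ∧
    ∀ i j, i ≠ j → A i ∩ A j ⊆ ({e₀ i, e₁ i} : Set X) ∩ {e₀ j, e₁ j}

def ZeroDim (Y : Type*) [TopologicalSpace Y] : Prop :=
  ∀ (y : Y) (U : Set Y), IsOpen U → y ∈ U → ∃ V : Set Y, IsClopen V ∧ y ∈ V ∧ V ⊆ U

set_option linter.unusedSectionVars false
set_option linter.unusedVariables false
set_option maxHeartbeats 1000000

section ForwardDev
section ArcBasics
variable [MetricSpace X] {A P Q : Set X} {x y z a b : X}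

lemma embed_of_cont_inj {Y Z : Type*} [TopologicalSpace Y] [TopologicalSpace Z]
    [CompactSpace Y] [T2Space Z] {f : Y → Z} (hc : Continuous f)
    (hi : Function.Injective f) : IsEmbedding f :=
  (hc.isClosedEmbedding hi).isEmbedding

namespace IsArc

lemma mem_left (h : IsArc A x y) : x ∈ A := by
  obtain ⟨f, _, hr, h0, _⟩ := h; rw [← hr, ← h0]; exact mem_range_self _

lemma mem_right (h : IsArc A x y) : y ∈ A := by
  obtain ⟨f, _, hr, _, h1⟩ := h; rw [← hr, ← h1]; exact mem_range_self _

lemma ne (h : IsArc A x y) : x ≠ y := by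
  obtain ⟨f, hf, _, h0, h1⟩ := h
  rw [← h0, ← h1]
  intro hh
  have := hf.injective hh
  replace this := Subtype.mk.inj this
  norm_num at this

lemma isCompact (h : IsArc A x y) : IsCompact A := by
  obtain ⟨f, hf, hr, _, _⟩ := h
  rw [← hr, ← image_univ]
  exact IsCompact.image isCompact_univ hf.continuous

lemma isClosed (h : IsArc A x y) : IsClosed A := h.isCompact.isClosed

lemma nonempty (h : IsArc A x y) : A.Nonempty := ⟨x, h.mem_left⟩

lemma isPreconnected (h : IsArc A x y) : IsPreconnected A := by
  obtain ⟨f, hf, hr, _, _⟩ := h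
  rw [← hr, ← image_univ]
  have : IsPreconnected (univ : Set (Set.Icc (0:ℝ) 1)) := isPreconnected_univ
  exact this.image f hf.continuous.continuousOn

lemma isConnected (h : IsArc A x y) : IsConnected A := ⟨h.nonempty, h.isPreconnected⟩

lemma infinite (h : IsArc A x y) : A.Infinite := by
  obtain ⟨f, hf, hr, _, _⟩ := h
  rw [← hr]
  haveI : Infinite (Set.Icc (0:ℝ) 1) := by
    rw [Set.infinite_coe_iff]
    exact Set.Icc_infinite (show (0:ℝ) < 1 by norm_num)
  exact Set.infinite_range_of_injective hf.injective

lemma symm (h : IsArc A x y) : IsArc A y x := by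
  obtain ⟨f, hf, hr, h0, h1⟩ := h
  set σ : Set.Icc (0:ℝ) 1 → Set.Icc (0:ℝ) 1 :=
    fun t => ⟨1 - t.1, by constructor <;> [linarith [t.2.2]; linarith [t.2.1]]⟩ with hσ
  have hσc : Continuous σ := Continuous.subtype_mk (continuous_const.sub continuous_subtype_val) _
  have hσi : Function.Injective σ := by
    intro a b hab
    simp only [hσ, Subtype.mk.injEq] at hab
    replace hab := Subtype.mk.inj hab
    exact Subtype.ext (by linarith)
  have hσs : Function.Surjective σ := by
    intro t
    refine ⟨⟨1 - t.1, by constructor <;> [linarith [t.2.2]; linarith [t.2.1]]⟩, ?_⟩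
    simp only [hσ]
    exact Subtype.ext (by simp)
  refine ⟨f ∘ σ, hf.comp (embed_of_cont_inj hσc hσi), ?_, ?_, ?_⟩
  · rw [Set.range_comp, Function.Surjective.range_eq hσs, image_univ, hr]
  · show f (σ _) = y
    have : σ ⟨0, by norm_num⟩ = ⟨1, by norm_num⟩ := Subtype.ext (by simp [hσ])
    rw [this, h1]
  · show f (σ _) = x
    have : σ ⟨1, by norm_num⟩ = ⟨0, by norm_num⟩ := Subtype.ext (by simp [hσ])
    rw [this, h0]

lemma orient (h : IsArc A x y) (ha : a ∈ ({x, y} : Set X)) (hb : b ∈ ({x, y} : Set X))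
    (hab : a ≠ b) : IsArc A a b := by
  rcases ha with rfl | ha
  · rcases hb with rfl | hb
    · exact absurd rfl hab
    · rw [mem_singleton_iff] at hb; subst hb; exact h
  · rw [mem_singleton_iff] at ha; subst ha
    rcases hb with rfl | hb
    · exact h.symm
    · rw [mem_singleton_iff] at hb; subst hb; exact absurd rfl hab

end IsArc

/-- Gluing two arcs that meet in exactly one common endpoint. -/
lemma isArc_glue (hP : IsArc P x y) (hQ : IsArc Q y z) (hPQ : P ∩ Q = {y}) :
    IsArc (P ∪ Q) x z := by
  obtain ⟨f, hf, hfr, hf0, hf1⟩ := hP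
  obtain ⟨g, hg, hgr, hg0, hg1⟩ := hQ
  set φ : ℝ → X := fun t =>
    if t ≤ 1/2 then f (projIcc 0 1 zero_le_one (2*t)) else g (projIcc 0 1 zero_le_one (2*t - 1))
    with hφ
  have hφc : Continuous φ := by
    apply Continuous.if_le
    · exact hf.continuous.comp (continuous_projIcc.comp (by fun_prop))
    · exact hg.continuous.comp (continuous_projIcc.comp (by fun_prop))
    · exact continuous_id
    · exact continuous_const
    · intro t ht
      have h2 : 2*t = 1 := by rw [ht]; norm_num
      have h3 : 2*t - 1 = 0 := by rw [ht]; norm_num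
      rw [h3, h2, Set.projIcc_right, Set.projIcc_left]
      show f ⟨1, _⟩ = g ⟨0, _⟩
      rw [hf1, hg0]
  set h : Set.Icc (0:ℝ) 1 → X := fun t => φ t.1 with hh
  have key_le : ∀ (t : Set.Icc (0:ℝ) 1) (ht : (t:ℝ) ≤ 1/2), h t = f ⟨2*t.1,
      ⟨by linarith [t.2.1], by linarith⟩⟩ := by
    intro t ht
    show φ t.1 = _
    simp only [hφ, if_pos ht]
    congr 1
    apply Set.projIcc_of_mem
  have key_gt : ∀ (t : Set.Icc (0:ℝ) 1) (ht : ¬((t:ℝ) ≤ 1/2)), h t = g ⟨2*t.1 - 1,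
      ⟨by push_neg at ht; linarith, by linarith [t.2.2]⟩⟩ := by
    intro t ht
    show φ t.1 = _
    simp only [hφ, if_neg ht]
    congr 1
    apply Set.projIcc_of_mem
  have hinj : Function.Injective h := by
    rintro t t' heq
    by_cases h1 : (t:ℝ) ≤ 1/2 <;> by_cases h2 : (t':ℝ) ≤ 1/2
    · rw [key_le t h1, key_le t' h2] at heq
      have := hf.injective heq
      replace this := Subtype.mk.inj this
      exact Subtype.ext (by linarith)
    · exfalso
      have hty : h t = y := by
        have hmem : h t ∈ P ∩ Q := ⟨by rw [key_le t h1, ← hfr]; exact mem_range_self _,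
          by rw [heq, key_gt t' h2, ← hgr]; exact mem_range_self _⟩
        rw [hPQ, mem_singleton_iff] at hmem; exact hmem
      have hty' : h t' = y := by rw [← heq]; exact hty
      rw [key_gt t' h2, ← hg0] at hty'
      have h2t' := hg.injective hty'
      replace h2t' := Subtype.mk.inj h2t'
      push_neg at h2
      linarith
    · exfalso
      have hty : h t' = y := by
        have hmem : h t' ∈ P ∩ Q := ⟨by rw [key_le t' h2, ← hfr]; exact mem_range_self _,
          by rw [← heq, key_gt t h1, ← hgr]; exact mem_range_self _⟩
        rw [hPQ, mem_singleton_iff] at hmem; exact hmem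
      have hty'' : h t = y := by rw [heq]; exact hty
      rw [key_gt t h1, ← hg0] at hty''
      have h2t := hg.injective hty''
      replace h2t := Subtype.mk.inj h2t
      push_neg at h1
      linarith
    · rw [key_gt t h1, key_gt t' h2] at heq
      have := hg.injective heq
      replace this := Subtype.mk.inj this
      exact Subtype.ext (by linarith)
  refine ⟨h, embed_of_cont_inj (hφc.comp continuous_subtype_val) hinj, ?_, ?_, ?_⟩
  · ext w
    constructor
    · rintro ⟨t, rfl⟩
      by_cases h1 : (t:ℝ) ≤ 1/2
      · left; rw [key_le t h1, ← hfr]; exact mem_range_self _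
      · right; rw [key_gt t h1, ← hgr]; exact mem_range_self _
    · rintro (hw | hw)
      · rw [← hfr] at hw
        obtain ⟨t₀, rfl⟩ := hw
        refine ⟨⟨t₀.1/2, ⟨by linarith [t₀.2.1], by linarith [t₀.2.2]⟩⟩, ?_⟩
        rw [key_le _ (by show t₀.1/2 ≤ 1/2; linarith [t₀.2.2])]
        congr 1
        exact Subtype.ext (by show 2*(t₀.1/2) = t₀.1; ring)
      · rw [← hgr] at hw
        obtain ⟨t₀, rfl⟩ := hw
        by_cases ht0 : t₀.1 = 0
        · refine ⟨⟨1/2, by norm_num⟩, ?_⟩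
          rw [key_le _ (by show (1/2:ℝ) ≤ 1/2; norm_num)]
          have ht0'' : t₀ = ⟨0, by norm_num⟩ := Subtype.ext ht0
          rw [ht0'', hg0, ← hf1]
          congr 1
          exact Subtype.ext (by show 2*(1/2:ℝ) = 1; norm_num)
        · have ht0' : 0 < t₀.1 := lt_of_le_of_ne t₀.2.1 (Ne.symm ht0)
          refine ⟨⟨(t₀.1+1)/2, ⟨by linarith [t₀.2.1], by linarith [t₀.2.2]⟩⟩, ?_⟩
          rw [key_gt _ (by show ¬((t₀.1+1)/2 ≤ 1/2); push_neg; linarith)]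
          congr 1
          exact Subtype.ext (by show 2*((t₀.1+1)/2) - 1 = t₀.1; ring)
  · rw [key_le _ (by show (0:ℝ) ≤ 1/2; norm_num)]
    rw [← hf0]
    congr 1
    exact Subtype.ext (by show 2*(0:ℝ) = 0; norm_num)
  · rw [key_gt _ (by show ¬((1:ℝ) ≤ 1/2); norm_num)]
    rw [← hg1]
    congr 1
    exact Subtype.ext (by show 2*(1:ℝ) - 1 = 1; norm_num)

/-- Two arcs with the same endpoints meeting exactly in them give a simple closed curve. -/
lemma circle_of_two_arcs (hP : IsArc P x y) (hQ : IsArc Q x y) (hPQ : P ∩ Q = {x, y}) :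
    ∃ F : AddCircle (1:ℝ) → X, IsEmbedding F := by
  haveI : Fact ((0:ℝ) < 1) := ⟨one_pos⟩
  obtain ⟨f, hf, hfr, hf0, hf1⟩ := hP
  obtain ⟨g, hg, hgr, hg0, hg1⟩ := hQ
  set φ : ℝ → X := fun t =>
    if t ≤ 1/2 then f (projIcc 0 1 zero_le_one (2*t)) else g (projIcc 0 1 zero_le_one (2 - 2*t))
    with hφ
  have hφc : Continuous φ := by
    apply Continuous.if_le
    · exact hf.continuous.comp (continuous_projIcc.comp (by fun_prop))
    · exact hg.continuous.comp (continuous_projIcc.comp (by fun_prop))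
    · exact continuous_id
    · exact continuous_const
    · intro t ht
      have h2 : 2*t = 1 := by rw [ht]; norm_num
      have h3 : 2 - 2*t = 1 := by rw [ht]; norm_num
      rw [h3, h2, Set.projIcc_right]
      show f ⟨1, _⟩ = g ⟨1, _⟩
      rw [hf1, hg1]
  have key_le : ∀ (t : ℝ) (ht0 : 0 ≤ t) (ht : t ≤ 1/2), φ t = f ⟨2*t, ⟨by linarith, by linarith⟩⟩ := by
    intro t ht0 ht
    simp only [hφ, if_pos ht]
    congr 1
    apply Set.projIcc_of_mem
  have key_gt : ∀ (t : ℝ) (ht : ¬(t ≤ 1/2)) (ht1 : t ≤ 1), φ t = g ⟨2 - 2*t,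
      ⟨by linarith, by push_neg at ht; linarith⟩⟩ := by
    intro t ht ht1
    simp only [hφ, if_neg ht]
    congr 1
    apply Set.projIcc_of_mem
  have hφ0 : φ 0 = x := by
    simp only [hφ, if_pos (show (0:ℝ) ≤ 1/2 by norm_num)]
    rw [show (2:ℝ)*0 = 0 by norm_num, Set.projIcc_left]
    exact hf0
  have hφ1 : φ 1 = x := by
    simp only [hφ, if_neg (show ¬((1:ℝ) ≤ 1/2) by norm_num)]
    rw [show (2:ℝ)-2*1 = 0 by norm_num, Set.projIcc_left]
    exact hg0
  have hperiod : φ 0 = φ (0 + 1) := by rw [zero_add, hφ0, hφ1]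
  have hφinj : ∀ t ∈ Set.Ico (0:ℝ) 1, ∀ t' ∈ Set.Ico (0:ℝ) 1, φ t = φ t' → t = t' := by
    have main : ∀ t ∈ Set.Ico (0:ℝ) 1, ∀ t' ∈ Set.Ico (0:ℝ) 1, t ≤ 1/2 → ¬(t' ≤ 1/2) →
        φ t = φ t' → False := by
      intro t ht t' ht' h1 h2 heq
      have heq2 := (key_le t ht.1 h1).symm.trans (heq.trans (key_gt t' h2 (le_of_lt ht'.2)))
      have hmem : f ⟨2*t, ⟨by linarith [ht.1], by linarith⟩⟩ ∈ P ∩ Q := by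
        refine ⟨by rw [← hfr]; exact mem_range_self _, ?_⟩
        rw [heq2, ← hgr]; exact mem_range_self _
      rw [hPQ, mem_insert_iff, mem_singleton_iff] at hmem
      rcases hmem with hmx | hmy
      · have hgm := heq2.symm.trans hmx
        rw [← hg0] at hgm
        have := hg.injective hgm
        replace this := Subtype.mk.inj this
        linarith [ht'.2]
      · have hgm := heq2.symm.trans hmy
        rw [← hg1] at hgm
        have := hg.injective hgm
        replace this := Subtype.mk.inj this
        push_neg at h2
        linarith
    intro t ht t' ht' heq
    by_cases h1 : t ≤ 1/2 <;> by_cases h2 : t' ≤ 1/2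
    · have := hf.injective ((key_le t ht.1 h1).symm.trans (heq.trans (key_le t' ht'.1 h2)))
      replace this := Subtype.mk.inj this
      linarith
    · exact absurd heq (by intro hq; exact main t ht t' ht' h1 h2 hq)
    · exact absurd heq.symm (by intro hq; exact main t' ht' t ht h2 h1 hq)
    · have := hg.injective ((key_gt t h1 (le_of_lt ht.2)).symm.trans
        (heq.trans (key_gt t' h2 (le_of_lt ht'.2))))
      replace this := Subtype.mk.inj this
      linarith
  set F : AddCircle (1:ℝ) → X := AddCircle.liftIco 1 0 φ with hF
  refine ⟨F, embed_of_cont_inj (AddCircle.liftIco_continuous hperiod hφc.continuousOn) ?_⟩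
  intro z z' heq
  have hrep : ∀ w : AddCircle (1:ℝ), F w = φ ((AddCircle.equivIco 1 0 w : ℝ)) := fun w => rfl
  have hz : (AddCircle.equivIco 1 0 z : ℝ) ∈ Set.Ico (0:ℝ) 1 :=
    ⟨(AddCircle.equivIco 1 0 z).2.1, by have := (AddCircle.equivIco 1 0 z).2.2; linarith⟩
  have hz' : (AddCircle.equivIco 1 0 z' : ℝ) ∈ Set.Ico (0:ℝ) 1 :=
    ⟨(AddCircle.equivIco 1 0 z').2.1, by have := (AddCircle.equivIco 1 0 z').2.2; linarith⟩
  have := hφinj _ hz _ hz' (by rw [← hrep, ← hrep, heq])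
  have h2 : AddCircle.equivIco 1 0 z = AddCircle.equivIco 1 0 z' := Subtype.ext this
  exact (AddCircle.equivIco 1 0).injective h2

end ArcBasics

lemma preconn_iccsub {s : Set ℝ} (hs : IsPreconnected (s ∩ Set.Icc 0 1)) :
    IsPreconnected {y : Set.Icc (0:ℝ) 1 | (y:ℝ) ∈ s} := by
  rw [← IsInducing.subtypeVal.isPreconnected_image]
  convert hs using 1
  ext z
  simp only [Set.mem_image, Set.mem_setOf_eq, Set.mem_inter_iff]
  constructor
  · rintro ⟨⟨y, hy⟩, hys, rfl⟩; exact ⟨hys, hy⟩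
  · rintro ⟨hzs, hz⟩; exact ⟨⟨z, hz⟩, hzs, rfl⟩

lemma pair_eq {a b x y : X} (hxy : x ≠ y) (hx : x ∈ ({a, b} : Set X))
    (hy : y ∈ ({a, b} : Set X)) : ({a, b} : Set X) = ({x, y} : Set X) := by
  simp only [mem_insert_iff, mem_singleton_iff] at hx hy
  rcases hx with rfl | rfl <;> rcases hy with rfl | rfl
  · exact absurd rfl hxy
  · rfl
  · exact Set.pair_comm _ _
  · exact absurd rfl hxy

section Chains
variable [MetricSpace X] {ι : Type*}
variable {A : ι → Set X} {e₀ e₁ : ι → X} {s : Finset ι} {p : X}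

/-- A chain of arcs from a `p`-arc to a different `p`-arc avoiding `p` at the links. -/
def GC (A : ι → Set X) (s : Finset ι) (p : X) (m : ℕ) : Prop :=
  ∃ (k : ℕ → ι) (y : ℕ → X),
    (∀ t ≤ m, k t ∈ s) ∧ p ∈ A (k 0) ∧ p ∈ A (k m) ∧ k 0 ≠ k m ∧
    ∀ t < m, y t ∈ A (k t) ∧ y t ∈ A (k (t+1)) ∧ y t ≠ p

lemma no_chain (harc : ∀ i ∈ s, IsArc (A i) (e₀ i) (e₁ i))
    (hint : ∀ i ∈ s, ∀ j ∈ s, i ≠ j → A i ∩ A j ⊆ ({e₀ i, e₁ i} : Set X) ∩ {e₀ j, e₁ j})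
    (hT : NoSimpleClosedCurve X) : ∀ m, ¬ GC A s p m := by
  intro m
  induction m using Nat.strong_induction_on with
  | _ m IH =>
  rintro ⟨k, y, hks, hp0, hpm, hne, hy⟩
  have hmpos : 0 < m := by
    rcases Nat.eq_zero_or_pos m with rfl | h
    · exact absurd rfl hne
    · exact h
  -- Surgery 1: remove duplicated indices
  by_cases H1 : ∃ a b, a < b ∧ b ≤ m ∧ k a = k b
  · obtain ⟨a, b, hab, hbm, hkab⟩ := H1
    set d := b - a with hd
    have hd1 : 1 ≤ d := by omega
    refine IH (m - d) (by omega) ⟨fun t => if t ≤ a then k t else k (t + d), fun t => if t < a then y t else y (t + d), ?_, ?_, ?_, ?_, ?_⟩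
    · intro t ht
      by_cases h : t ≤ a
      · simp only [if_pos h]; exact hks t (by omega)
      · simp only [if_neg h]; exact hks _ (by omega)
    · simp only [if_pos (Nat.zero_le a)]; exact hp0
    · by_cases h : m - d ≤ a
      · have h1 : m - d = a := by omega
        have h2 : b = m := by omega
        simp only [h1, if_pos (le_refl a), hkab, h2]
        exact hpm
      · simp only [if_neg h, show m - d + d = m from by omega]
        exact hpm
    · by_cases h : m - d ≤ a
      · have h1 : m - d = a := by omega
        have h2 : b = m := by omega
        simp only [if_pos (Nat.zero_le a), h1, if_pos (le_refl a), hkab, h2]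
        exact hne
      · simp only [if_pos (Nat.zero_le a), if_neg h, show m - d + d = m from by omega]
        exact hne
    · intro t ht
      by_cases h : t < a
      · have h1 : t ≤ a := by omega
        have h2 : t + 1 ≤ a := by omega
        simp only [if_pos h, if_pos h1, if_pos h2]
        exact hy t (by omega)
      · have h2 : ¬ (t + 1 ≤ a) := by omega
        simp only [if_neg h, if_neg h2]
        by_cases h3 : t ≤ a
        · have h4 : t = a := by omega
          have hb : a + d = b := by omega
          have hb2 : a + 1 + d = b + 1 := by omega
          simp only [h4, if_pos le_rfl, hb, hb2, hkab]
          exact hy b (by omega)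
        · simp only [if_neg h3]
          rw [show t + 1 + d = (t + d) + 1 by omega]
          exact hy (t + d) (by omega)
  -- Surgery 2: truncate at an interior p-arc
  by_cases H2 : ∃ c, 0 < c ∧ c < m ∧ p ∈ A (k c)
  · obtain ⟨c, hc0, hcm, hpc⟩ := H2
    push_neg at H1
    refine IH c hcm ⟨k, y, fun t ht => hks t (by omega), hp0, hpc, ?_, fun t ht => hy t (by omega)⟩
    exact H1 0 c hc0 (by omega)
  -- Surgery 3: splice along a shortcut
  by_cases H3 : ∃ a b z, a + 1 < b ∧ b ≤ m ∧ z ∈ A (k a) ∧ z ∈ A (k b) ∧ z ≠ p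
  · obtain ⟨a, b, z, hab, hbm, hza, hzb, hzp⟩ := H3
    set d := b - a - 1 with hd
    have hd1 : 1 ≤ d := by omega
    refine IH (m - d) (by omega) ⟨fun t => if t ≤ a then k t else k (t + d),
      fun t => if t < a then y t else if t = a then z else y (t + d), ?_, ?_, ?_, ?_, ?_⟩
    · intro t ht
      by_cases h : t ≤ a
      · simp only [if_pos h]; exact hks t (by omega)
      · simp only [if_neg h]; exact hks _ (by omega)
    · simp only [if_pos (Nat.zero_le a)]; exact hp0
    · have h : ¬ (m - d ≤ a) := by omega
      simp only [if_neg h, show m - d + d = m from by omega]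
      exact hpm
    · have h : ¬ (m - d ≤ a) := by omega
      simp only [if_pos (Nat.zero_le a), if_neg h, show m - d + d = m from by omega]
      exact hne
    · intro t ht
      by_cases h : t < a
      · have h1 : t ≤ a := by omega
        have h2 : t + 1 ≤ a := by omega
        simp only [if_pos h, if_pos h1, if_pos h2]
        exact hy t (by omega)
      · by_cases h3 : t = a
        · have hb : a + 1 + d = b := by omega
          simp only [h3, if_neg (lt_irrefl a), if_pos rfl, if_true, if_pos (le_refl a),
            if_neg (show ¬ (a + 1 ≤ a) from by omega), hb]
          exact ⟨hza, hzb, hzp⟩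
        · have h5 : ¬ (t ≤ a) := by omega
          have h6 : ¬ (t + 1 ≤ a) := by omega
          simp only [if_neg h, if_neg h3, if_neg h5, if_neg h6]
          rw [show t + 1 + d = (t + d) + 1 by omega]
          exact hy (t + d) (by omega)
  -- now the chain is clean: build a simple closed curve
  push_neg at H1 H2 H3
  have inj : ∀ a b, a < b → b ≤ m → k a ≠ k b := fun a b h1 h2 => H1 a b h1 h2
  have hinterior : ∀ c, 0 < c → c < m → p ∉ A (k c) := fun c h1 h2 => H2 c h1 h2
  have hshort : ∀ a b z, a + 1 < b → b ≤ m → z ∈ A (k a) → z ∈ A (k b) → z = p := H3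
  -- endpoint bookkeeping
  have hconsmem : ∀ r, r < m → y r ∈ ({e₀ (k r), e₁ (k r)} : Set X) ∩
      {e₀ (k (r+1)), e₁ (k (r+1))} := fun r hr =>
    hint (k r) (hks r (by omega)) (k (r+1)) (hks (r+1) (by omega))
      (inj r (r+1) (by omega) (by omega)) ⟨(hy r hr).1, (hy r hr).2.1⟩
  have hpe0 : p ∈ ({e₀ (k 0), e₁ (k 0)} : Set X) ∩ {e₀ (k m), e₁ (k m)} :=
    hint (k 0) (hks 0 (by omega)) (k m) (hks m le_rfl) hne ⟨hp0, hpm⟩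
  have cons_inter : ∀ r, r < m → A (k r) ∩ A (k (r+1)) ⊆ {y r, p} := by
    intro r hr w hw
    by_contra hwmem
    simp only [mem_insert_iff, mem_singleton_iff, not_or] at hwmem
    obtain ⟨hwy, hwp⟩ := hwmem
    have hwpair := hint (k r) (hks r (by omega)) (k (r+1)) (hks (r+1) (by omega))
      (inj r (r+1) (by omega) (by omega)) hw
    have e1 : ({e₀ (k r), e₁ (k r)} : Set X) = {w, y r} :=
      pair_eq hwy hwpair.1 (hconsmem r hr).1
    have e2 : ({e₀ (k (r+1)), e₁ (k (r+1))} : Set X) = {w, y r} :=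
      pair_eq hwy hwpair.2 (hconsmem r hr).2
    have hia : IsArc (A (k r)) w (y r) :=
      (harc _ (hks r (by omega))).orient hwpair.1 (hconsmem r hr).1 hwy
    have hib : IsArc (A (k (r+1))) w (y r) :=
      (harc _ (hks (r+1) (by omega))).orient hwpair.2 (hconsmem r hr).2 hwy
    have hinter : A (k r) ∩ A (k (r+1)) = {w, y r} := by
      apply subset_antisymm
      · intro v hv
        have := hint (k r) (hks r (by omega)) (k (r+1)) (hks (r+1) (by omega))
          (inj r (r+1) (by omega) (by omega)) hv
        rw [e1] at this
        exact this.1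
      · rintro v (rfl | hv)
        · exact hw
        · rw [mem_singleton_iff] at hv; subst hv
          exact ⟨(hy r hr).1, (hy r hr).2.1⟩
    exact hT (circle_of_two_arcs hia hib hinter)
  have harc0 : IsArc (A (k 0)) p (y 0) :=
    (harc _ (hks 0 (by omega))).orient hpe0.1 (hconsmem 0 hmpos).1
      (Ne.symm (hy 0 hmpos).2.2)
  have ydist : ∀ r, r + 1 < m → y r ≠ y (r+1) := by
    intro r hr heq
    have := hshort r (r+2) (y r) (by omega) (by omega) (hy r (by omega)).1
      (by rw [heq]; exact (hy (r+1) (by omega)).2.1)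
    exact (hy r (by omega)).2.2 this
  set U : ℕ → Set X := fun t => ⋃ r ∈ Finset.range (t+1), A (k r) with hU
  have hUsucc : ∀ t, U (t+1) = U t ∪ A (k (t+1)) := by
    intro t
    rw [hU]
    simp only
    rw [Finset.range_add_one, Finset.set_biUnion_insert]
    exact union_comm _ _
  have hUmem : ∀ t r, r ≤ t → ∀ w, w ∈ A (k r) → w ∈ U t := by
    intro t r hr w hw
    exact Set.mem_biUnion (Finset.mem_range.mpr (by omega)) hw
  have build : ∀ t, t + 1 ≤ m → IsArc (U t) p (y t) := by
    intro t
    induction t with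
    | zero =>
      intro _
      have hU0 : U 0 = A (k 0) := by
        rw [hU]; simp
      rw [hU0]; exact harc0
    | succ t iht =>
      intro ht
      have hPt := iht (by omega)
      have hQ : IsArc (A (k (t+1))) (y t) (y (t+1)) :=
        (harc _ (hks (t+1) (by omega))).orient (hconsmem t (by omega)).2
          (hconsmem (t+1) (by omega)).1 (ydist t (by omega))
      have hinter : U t ∩ A (k (t+1)) = {y t} := by
        apply subset_antisymm
        · rintro w ⟨hw1, hw2⟩
          simp only [hU, Set.mem_iUnion, Finset.mem_range, exists_prop] at hw1
          obtain ⟨r, hr, hwr⟩ := hw1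
          by_cases hrt : r = t
          · rw [hrt] at hwr
            rcases cons_inter t (by omega) ⟨hwr, hw2⟩ with rfl | hwp
            · exact rfl
            · rw [mem_singleton_iff] at hwp; subst hwp
              exact absurd hw2 (hinterior (t+1) (by omega) (by omega))
          · have := hshort r (t+1) w (by omega) (by omega) hwr hw2
            subst this
            exact absurd hw2 (hinterior (t+1) (by omega) (by omega))
        · rintro w hw
          rw [mem_singleton_iff] at hw; subst hw
          exact ⟨hUmem t t le_rfl _ (hy t (by omega)).1, (hy t (by omega)).2.1⟩
      have hglue := isArc_glue hPt hQ hinter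
      rw [hUsucc t]
      exact hglue
  -- final circle
  have hm1 : m - 1 + 1 = m := by omega
  have hylast := hy (m-1) (by omega)
  have hQm : IsArc (A (k m)) p (y (m-1)) := by
    have hy2 : y (m-1) ∈ ({e₀ (k m), e₁ (k m)} : Set X) := by
      have := (hconsmem (m-1) (by omega)).2
      rwa [hm1] at this
    exact (harc _ (hks m le_rfl)).orient hpe0.2 hy2 (Ne.symm hylast.2.2)
  have hinterPQ : U (m-1) ∩ A (k m) = {p, y (m-1)} := by
    apply subset_antisymm
    · rintro w ⟨hw1, hw2⟩
      simp only [hU, Set.mem_iUnion, Finset.mem_range, exists_prop] at hw1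
      obtain ⟨r, hr, hwr⟩ := hw1
      by_cases hrt : r = m - 1
      · rw [hrt] at hwr
        have hci := cons_inter (m-1) (by omega)
        rw [hm1] at hci
        rcases hci ⟨hwr, hw2⟩ with rfl | hwp
        · exact Set.mem_insert_of_mem _ rfl
        · rw [mem_singleton_iff] at hwp; subst hwp
          exact Set.mem_insert _ _
      · have := hshort r m w (by omega) le_rfl hwr hw2
        subst this
        exact Set.mem_insert _ _
    · rintro w (rfl | hw)
      · exact ⟨hUmem (m-1) 0 (by omega) _ hp0, hpm⟩
      · rw [mem_singleton_iff] at hw; subst hw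
        refine ⟨hUmem (m-1) (m-1) le_rfl _ hylast.1, ?_⟩
        have := hylast.2.1
        rwa [hm1] at this
  exact hT (circle_of_two_arcs (build (m-1) (by omega)) hQm hinterPQ)

end Chains
section RTG
variable [MetricSpace X] {ι : Type*} {A : ι → Set X} {e₀ e₁ : ι → X} {s : Finset ι} {p : X}

def ARel (A : ι → Set X) (s : Finset ι) (p : X) (a b : ι) : Prop :=
  a ∈ s ∧ b ∈ s ∧ a ≠ b ∧ ((A a ∩ A b) \ {p}).Nonempty

lemma ARel.symm' : Symmetric (ARel A s p) := by
  rintro a b ⟨h1, h2, h3, z, hz⟩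
  exact ⟨h2, h1, h3.symm, z, ⟨⟨hz.1.2, hz.1.1⟩, hz.2⟩⟩

lemma rtg_symm {a b : ι} (h : Relation.ReflTransGen (ARel A s p) a b) :
    Relation.ReflTransGen (ARel A s p) b a :=
  @Std.Symm.symm _ _ (@Relation.ReflTransGen.symmetric _ _ ⟨fun a b h => ARel.symm' h⟩) _ _ h

lemma rtg_chain {i j : ι} (hi : i ∈ s) (h : Relation.ReflTransGen (ARel A s p) i j) :
    ∃ (m : ℕ) (k : ℕ → ι) (y : ℕ → X), k 0 = i ∧ k m = j ∧ (∀ t ≤ m, k t ∈ s) ∧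
      ∀ t < m, y t ∈ A (k t) ∧ y t ∈ A (k (t+1)) ∧ y t ≠ p := by
  induction h with
  | refl => exact ⟨0, fun _ => i, fun _ => p, rfl, rfl, fun t _ => hi, fun t ht => by omega⟩
  | @tail b c hab hbc ih =>
    obtain ⟨m, k, y, hk0, hkm, hks, hy⟩ := ih
    obtain ⟨hb, hc, hbc', z, hz⟩ := hbc
    refine ⟨m+1, fun t => if t ≤ m then k t else c, fun t => if t < m then y t else z,
      ?_, ?_, ?_, ?_⟩
    · simp only [if_pos (Nat.zero_le m)]; exact hk0
    · simp only [if_neg (show ¬ (m+1 ≤ m) from by omega)]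
    · intro t ht
      by_cases h : t ≤ m
      · simp only [if_pos h]; exact hks t h
      · simp only [if_neg h]; exact hc
    · intro t ht
      by_cases h : t < m
      · have h1 : t ≤ m := by omega
        have h2 : t + 1 ≤ m := by omega
        simp only [if_pos h, if_pos h1, if_pos h2]
        exact hy t h
      · have h1 : t = m := by omega
        have h2 : ¬ (t + 1 ≤ m) := by omega
        simp only [if_neg h, h1, if_neg (lt_irrefl m), if_pos (le_refl m),
          if_neg (show ¬ (m+1 ≤ m) from by omega), hkm]
        exact ⟨hz.1.1, hz.1.2, hz.2⟩

lemma no_rtg (harc : ∀ i ∈ s, IsArc (A i) (e₀ i) (e₁ i))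
    (hint : ∀ i ∈ s, ∀ j ∈ s, i ≠ j → A i ∩ A j ⊆ ({e₀ i, e₁ i} : Set X) ∩ {e₀ j, e₁ j})
    (hT : NoSimpleClosedCurve X) {i j : ι} (hi : i ∈ s) (hj : j ∈ s) (hij : i ≠ j)
    (hpi : p ∈ A i) (hpj : p ∈ A j) : ¬ Relation.ReflTransGen (ARel A s p) i j := by
  intro h
  obtain ⟨m, k, y, hk0, hkm, hks, hy⟩ := rtg_chain hi h
  exact no_chain harc hint hT m ⟨k, y, hks, by rwa [hk0], by rwa [hkm], by rw [hk0, hkm]; exact hij, hy⟩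

end RTG

section Helpers
variable [MetricSpace X]

lemma not_sep [ConnectedSpace X] {S T : Set X} (hS : IsClosed S) (hT : IsClosed T)
    (hUn : S ∪ T = univ) (hD : S ∩ T = ∅) (hSne : S.Nonempty) (hTne : T.Nonempty) : False := by
  have h := isPreconnected_univ (α := X) Sᶜ Tᶜ hS.isOpen_compl hT.isOpen_compl
  have hsub : (univ : Set X) ⊆ Sᶜ ∪ Tᶜ := by
    intro x _
    by_contra hx
    simp only [mem_union, mem_compl_iff, not_or, not_not] at hx
    have : x ∈ S ∩ T := ⟨hx.1, hx.2⟩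
    rw [hD] at this
    exact this
  obtain ⟨t, ht⟩ := hTne
  obtain ⟨s', hs'⟩ := hSne
  have htS : t ∉ S := fun h => by
    have : t ∈ S ∩ T := ⟨h, ht⟩
    rw [hD] at this; exact this
  have hsT : s' ∉ T := fun h => by
    have : s' ∈ S ∩ T := ⟨hs', h⟩
    rw [hD] at this; exact this
  obtain ⟨w, hw⟩ := h hsub ⟨t, mem_univ t, htS⟩ ⟨s', mem_univ s', hsT⟩
  have : w ∈ S ∪ T := hUn ▸ mem_univ w
  rcases this with h1 | h1
  · exact hw.2.1 h1
  · exact hw.2.2 h1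

lemma other_endpoint {A : Set X} {a b y : X} (h : IsArc A a b) (hy : y ∈ ({a, b} : Set X)) :
    ∃ x, IsArc A x y ∧ ({a, b} : Set X) = {x, y} ∧ x ≠ y := by
  rcases hy with rfl | hy
  · exact ⟨b, h.symm, Set.pair_comm _ _, h.ne.symm⟩
  · rw [mem_singleton_iff] at hy; subst hy
    exact ⟨a, h, rfl, h.ne⟩

lemma homeo_of_arc_univ {x y : X} (h : IsArc (univ : Set X) x y) :
    Nonempty (X ≃ₜ Set.Icc (0:ℝ) 1) := by
  obtain ⟨f, hf, hr, -, -⟩ := h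
  have hbij : Function.Bijective f := ⟨hf.injective, Set.range_eq_univ.mp hr⟩
  exact ⟨(Continuous.homeoOfEquivCompactToT2 (f := Equiv.ofBijective f hbij)
    hf.continuous).symm⟩

end Helpers

section M3
variable [MetricSpace X] [CompactSpace X] [ConnectedSpace X] [Nontrivial X]

omit [CompactSpace X] [ConnectedSpace X] [Nontrivial X] in
lemma preconn_one_branch3 {p : X} {Da Db Dc : Set X}
    (hopa : IsOpen Da) (hopb : IsOpen Db) (hopc : IsOpen Dc)
    (hcov : Da ∪ Db ∪ Dc = {p}ᶜ)
    (hab : Da ∩ Db = ∅) (hac : Da ∩ Dc = ∅) (hbc : Db ∩ Dc = ∅)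
    {T : Set X} (hpre : IsPreconnected T) (hsub : T ⊆ {p}ᶜ)
    (hTa : (T ∩ Da).Nonempty) (hTb : (T ∩ Db).Nonempty) : False := by
  have hcover : T ⊆ Da ∪ (Db ∪ Dc) := by
    intro x hx
    have : x ∈ Da ∪ Db ∪ Dc := by rw [hcov]; exact hsub hx
    rcases this with (h | h) | h
    · exact Or.inl h
    · exact Or.inr (Or.inl h)
    · exact Or.inr (Or.inr h)
  obtain ⟨w, hw⟩ := hpre Da (Db ∪ Dc) hopa (hopb.union hopc) hcover
    ⟨hTa.choose, hTa.choose_spec.1, hTa.choose_spec.2⟩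
    ⟨hTb.choose, hTb.choose_spec.1, Or.inl hTb.choose_spec.2⟩
  rcases hw.2.2 with h1 | h1
  · have : w ∈ Da ∩ Db := ⟨hw.2.1, h1⟩
    rw [hab] at this; exact this
  · have : w ∈ Da ∩ Dc := ⟨hw.2.1, h1⟩
    rw [hac] at this; exact this

lemma ncstar_disconnected3 (p : X) (Da Db Dc : Set X)
    (hopa : IsOpen Da) (hopb : IsOpen Db) (hopc : IsOpen Dc)
    (hnea : Da.Nonempty) (hneb : Db.Nonempty) (hnec : Dc.Nonempty)
    (hab : Da ∩ Db = ∅) (hac : Da ∩ Dc = ∅) (hbc : Db ∩ Dc = ∅)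
    (hcov : Da ∪ Db ∪ Dc = {p}ᶜ)
    (B : NonemptyCompacts X) (hB : B ∈ NCstar X) (hpB : p ∉ (B : Set X)) :
    ¬ IsConnected (NCstar X) := by
  classical
  have hedist : ∀ (S T : NonemptyCompacts X),
      EMetric.hausdorffEdist (S : Set X) (T : Set X) ≠ ⊤ := fun S T =>
    Metric.hausdorffEdist_ne_top_of_nonempty_of_bounded S.nonempty T.nonempty
      S.isCompact.isBounded T.isCompact.isBounded
  -- "meets two of the branches" is impossible for preconnected subsets of the complement
  have honeb : ∀ (T : Set X), IsPreconnected T → T ⊆ {p}ᶜ →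
      ((T ∩ Da).Nonempty ∧ (T ∩ Db).Nonempty → False) ∧
      ((T ∩ Da).Nonempty ∧ (T ∩ Dc).Nonempty → False) ∧
      ((T ∩ Db).Nonempty ∧ (T ∩ Dc).Nonempty → False) := by
    intro T hpre hsub
    refine ⟨fun h => preconn_one_branch3 hopa hopb hopc hcov hab hac hbc hpre hsub h.1 h.2,
      fun h => ?_, fun h => ?_⟩
    · refine preconn_one_branch3 hopa hopc hopb ?_ hac hab ?_ hpre hsub h.1 h.2
      · rw [← hcov]; ac_rfl
      · rw [← hbc]; exact Set.inter_comm _ _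
    · refine preconn_one_branch3 hopb hopc hopa ?_ hbc ?_ ?_ hpre hsub h.1 h.2
      · rw [← hcov]; ac_rfl
      · rw [← hab]; exact Set.inter_comm _ _
      · rw [← hac]; exact Set.inter_comm _ _
  set Xnc : NonemptyCompacts X := ⟨⟨univ, isCompact_univ⟩, univ_nonempty⟩ with hXnc
  have hXmem : Xnc ∈ NCstar X := by
    constructor
    · exact connectedSpace_iff_univ.mp ‹_›
    · show IsPreconnected ((univ : Set X))ᶜ
      rw [compl_univ]
      exact isPreconnected_empty
  have key_U : ∀ A : NonemptyCompacts X, A ∈ NCstar X → p ∈ (A : Set X) →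
      ∃ ε > 0, ∀ B' : NonemptyCompacts X, B' ∈ NCstar X → dist B' A < ε →
        p ∈ (B' : Set X) := by
    intro A hA hpA
    have hsub' : ((A : Set X))ᶜ ⊆ {p}ᶜ := fun x hx => by
      simp only [mem_compl_iff, mem_singleton_iff] at *
      rintro rfl; exact hx hpA
    have hmeet := honeb ((A : Set X))ᶜ hA.2 hsub'
    -- two of the three branches are inside A
    have hii : ∃ D' D'' : Set X, IsOpen D' ∧ IsOpen D'' ∧ D'.Nonempty ∧ D''.Nonempty ∧
        D' ⊆ (A : Set X) ∧ D'' ⊆ (A : Set X) ∧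
        (∀ (T : Set X), IsPreconnected T → T ⊆ {p}ᶜ →
          (T ∩ D').Nonempty → (T ∩ D'').Nonempty → False) := by
      have hsub2 : ∀ (D' : Set X), ((A : Set X))ᶜ ∩ D' = ∅ → D' ⊆ (A : Set X) := by
        intro D' h x hx
        by_contra hq
        exact absurd (Set.eq_empty_iff_forall_notMem.mp h x ⟨hq, hx⟩) not_false
      by_cases ha' : ((A : Set X))ᶜ ∩ Da = ∅
      · by_cases hb' : ((A : Set X))ᶜ ∩ Db = ∅
        · exact ⟨Da, Db, hopa, hopb, hnea, hneb, hsub2 _ ha', hsub2 _ hb',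
            fun T h1 h2 h3 h4 => (honeb T h1 h2).1 ⟨h3, h4⟩⟩
        · have hc' : ((A : Set X))ᶜ ∩ Dc = ∅ := by
            by_contra hq
            rw [← Set.not_nonempty_iff_eq_empty] at hb' hq
            push_neg at hb' hq
            exact (hmeet.2.2) ⟨hb', hq⟩
          exact ⟨Da, Dc, hopa, hopc, hnea, hnec, hsub2 _ ha', hsub2 _ hc',
            fun T h1 h2 h3 h4 => (honeb T h1 h2).2.1 ⟨h3, h4⟩⟩
      · have hb' : ((A : Set X))ᶜ ∩ Db = ∅ := by
          by_contra hq
          rw [← Set.not_nonempty_iff_eq_empty] at ha' hq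
          push_neg at ha' hq
          exact (hmeet.1) ⟨ha', hq⟩
        have hc' : ((A : Set X))ᶜ ∩ Dc = ∅ := by
          by_contra hq
          rw [← Set.not_nonempty_iff_eq_empty] at ha' hq
          push_neg at ha' hq
          exact (hmeet.2.1) ⟨ha', hq⟩
        exact ⟨Db, Dc, hopb, hopc, hneb, hnec, hsub2 _ hb', hsub2 _ hc',
          fun T h1 h2 h3 h4 => (honeb T h1 h2).2.2 ⟨h3, h4⟩⟩
    obtain ⟨D', D'', hop', hop'', hne', hne'', hDa', hDb', hmeet'⟩ := hii
    obtain ⟨qa, hqa⟩ := hne'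
    obtain ⟨qb, hqb⟩ := hne''
    obtain ⟨εa, hεa, hballa⟩ := Metric.isOpen_iff.mp hop' qa hqa
    obtain ⟨εb, hεb, hballb⟩ := Metric.isOpen_iff.mp hop'' qb hqb
    refine ⟨min εa εb, lt_min hεa hεb, ?_⟩
    intro B' hB' hdist
    have hfind : ∀ (q : X), q ∈ (A : Set X) → ∀ ε', 0 < ε' → dist B' A < ε' →
        ∃ w ∈ (B' : Set X), dist q w < ε' := by
      intro q hq ε' hε' hd
      have h1 : Metric.infDist q (B' : Set X) ≤ Metric.hausdorffDist (A : Set X) (B' : Set X) :=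
        Metric.infDist_le_hausdorffDist_of_mem hq (hedist A B')
      have h2 : Metric.hausdorffDist (A : Set X) (B' : Set X) < ε' := by
        rw [Metric.hausdorffDist_comm]
        rw [NonemptyCompacts.dist_eq] at hd
        exact hd
      exact (Metric.infDist_lt_iff B'.nonempty).mp (lt_of_le_of_lt h1 h2)
    obtain ⟨wa, hwa, hwa'⟩ := hfind qa (hDa' hqa) (min εa εb) (lt_min hεa hεb) hdist
    obtain ⟨wb, hwb, hwb'⟩ := hfind qb (hDb' hqb) (min εa εb) (lt_min hεa hεb) hdist
    have hwaD : wa ∈ D' := by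
      apply hballa
      rw [Metric.mem_ball, dist_comm]
      exact lt_of_lt_of_le hwa' (min_le_left _ _)
    have hwbD : wb ∈ D'' := by
      apply hballb
      rw [Metric.mem_ball, dist_comm]
      exact lt_of_lt_of_le hwb' (min_le_right _ _)
    by_contra hpB'
    have hsub'' : (B' : Set X) ⊆ {p}ᶜ := fun x hx => by
      simp only [mem_compl_iff, mem_singleton_iff]
      rintro rfl; exact hpB' hx
    exact hmeet' (B' : Set X) hB'.1.2 hsub'' ⟨wa, hwa, hwaD⟩ ⟨wb, hwb, hwbD⟩
  have key_V : ∀ A : NonemptyCompacts X, p ∉ (A : Set X) →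
      ∃ ε > 0, ∀ B' : NonemptyCompacts X, dist B' A < ε → p ∉ (B' : Set X) := by
    intro A hpA
    have hpos : 0 < Metric.infDist p (A : Set X) :=
      (A.isCompact.isClosed.notMem_iff_infDist_pos A.nonempty).mp hpA
    refine ⟨Metric.infDist p (A : Set X), hpos, ?_⟩
    intro B' hd hpB'
    have h1 : Metric.infDist p (A : Set X) ≤ Metric.hausdorffDist (B' : Set X) (A : Set X) :=
      Metric.infDist_le_hausdorffDist_of_mem hpB' (hedist B' A)
    rw [NonemptyCompacts.dist_eq] at hd
    exact absurd hd (not_lt.mpr h1)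
  intro hcon
  choose εU hεU hU using fun (A : {A : NonemptyCompacts X // A ∈ NCstar X ∧ p ∈ (A : Set X)}) =>
    key_U A.1 A.2.1 A.2.2
  choose εV hεV hV using fun (A : {A : NonemptyCompacts X // p ∉ (A : Set X)}) =>
    key_V A.1 A.2
  set u : Set (NonemptyCompacts X) := ⋃ A, Metric.ball A.1 (εU A) with hu
  set v : Set (NonemptyCompacts X) := ⋃ A, Metric.ball A.1 (εV A) with hv
  have hcon2 := hcon.2 u v (isOpen_iUnion fun _ => Metric.isOpen_ball)
    (isOpen_iUnion fun _ => Metric.isOpen_ball) ?_ ?_ ?_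
  · obtain ⟨C, hC⟩ := hcon2
    obtain ⟨hCnc, hCu, hCv⟩ := hC
    rw [hu] at hCu
    simp only [mem_iUnion] at hCu
    obtain ⟨A', hA'⟩ := hCu
    have hpC : p ∈ (C : Set X) := hU A' C hCnc (Metric.mem_ball.mp hA')
    rw [hv] at hCv
    simp only [mem_iUnion] at hCv
    obtain ⟨A'', hA''⟩ := hCv
    exact hV A'' C (Metric.mem_ball.mp hA'') hpC
  · intro C hC
    by_cases hpC : p ∈ (C : Set X)
    · left
      rw [hu]
      refine mem_iUnion.mpr ⟨⟨C, hC, hpC⟩, ?_⟩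
      exact Metric.mem_ball_self (hεU ⟨C, hC, hpC⟩)
    · right
      rw [hv]
      refine mem_iUnion.mpr ⟨⟨C, hpC⟩, ?_⟩
      exact Metric.mem_ball_self (hεV ⟨C, hpC⟩)
  · refine ⟨Xnc, hXmem, ?_⟩
    rw [hu]
    have hpX : p ∈ (Xnc : Set X) := mem_univ p
    exact mem_iUnion.mpr ⟨⟨Xnc, hXmem, hpX⟩, Metric.mem_ball_self (hεU _)⟩
  · refine ⟨B, hB, ?_⟩
    rw [hv]
    exact mem_iUnion.mpr ⟨⟨B, hpB⟩, Metric.mem_ball_self (hεV _)⟩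

end M3
section Main
variable [MetricSpace X] [CompactSpace X] [ConnectedSpace X] [Nontrivial X]

theorem forward_main (hT : NoSimpleClosedCurve X) :
    ∀ (N : ℕ) {n : ℕ} (s : Finset (Fin n))
      (A : Fin n → Set X) (e₀ e₁ : Fin n → X), s.card = N →
      (∀ i ∈ s, IsArc (A i) (e₀ i) (e₁ i)) →
      ((⋃ i ∈ s, A i) = Set.univ) →
      (∀ i ∈ s, ∀ j ∈ s, i ≠ j → A i ∩ A j ⊆ ({e₀ i, e₁ i} : Set X) ∩ {e₀ j, e₁ j}) →
      Nonempty (X ≃ₜ Set.Icc (0 : ℝ) 1) ∨ ¬ IsConnected (NCstar X) := by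
  intro N
  induction N using Nat.strong_induction_on with
  | _ N IH =>
  intro n s A e₀ e₁ hcard harc hcov hint
  classical
  have hXne : Nonempty X := inferInstance
  obtain ⟨x₀⟩ := hXne
  have hsne : s.Nonempty := by
    by_contra hq
    rw [Finset.not_nonempty_iff_eq_empty] at hq
    subst hq
    simp only [Finset.notMem_empty, Set.iUnion_of_empty, Set.iUnion_empty] at hcov
    exact absurd (hcov ▸ Set.mem_univ x₀) (by simp)
  by_cases hcard1 : s.card = 1
  · -- single arc: X is an arc
    obtain ⟨i, hi⟩ := Finset.card_eq_one.mp hcard1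
    subst hi
    left
    apply homeo_of_arc_univ (x := e₀ i) (y := e₁ i)
    have : A i = univ := by
      rw [← hcov]
      simp
    rw [← this]
    exact harc i (Finset.mem_singleton_self i)
  -- at least two arcs: some pair intersects
  have hcard2 : 2 ≤ s.card := by
    have := Finset.card_pos.mpr hsne
    omega
  have hpairx : ∃ (y : X) (i j : Fin n), i ∈ s ∧ j ∈ s ∧ i ≠ j ∧ y ∈ A i ∩ A j := by
    by_contra hq
    push_neg at hq
    obtain ⟨i, hi⟩ := hsne
    have hers : (s.erase i).Nonempty := by
      rw [← Finset.card_pos, Finset.card_erase_of_mem hi]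
      omega
    obtain ⟨j, hj⟩ := hers
    refine not_sep (S := A i) (T := ⋃ l ∈ s.erase i, A l) ((harc i hi).isClosed)
      (Set.Finite.isClosed_biUnion (Finset.finite_toSet _)
        (fun l hl => (harc l (Finset.mem_of_mem_erase hl)).isClosed)) ?_ ?_
      (harc i hi).nonempty ?_
    · rw [← Finset.insert_erase hi, Finset.set_biUnion_insert] at hcov
      exact hcov
    · rw [Set.eq_empty_iff_forall_notMem]
      rintro x ⟨hx1, hx2⟩
      simp only [Set.mem_iUnion, exists_prop] at hx2
      obtain ⟨l, hl, hxl⟩ := hx2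
      exact hq x i l hi (Finset.mem_of_mem_erase hl)
        (fun h => (Finset.mem_erase.mp hl).1 h.symm) ⟨hx1, hxl⟩
    · obtain ⟨w, hw⟩ := (harc j (Finset.mem_of_mem_erase hj)).nonempty
      exact ⟨w, Set.mem_biUnion hj hw⟩
  by_cases H1 : ∃ (y : X) (i j : Fin n), (i ∈ s ∧ j ∈ s ∧ i ≠ j ∧ y ∈ A i ∩ A j) ∧
      ∀ l ∈ s, y ∈ A l → l = i ∨ l = j
  · -- a degree-two junction: glue or find a circle
    obtain ⟨y, i, j, ⟨hi, hj, hij, hyij⟩, hyonly⟩ := H1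
    have hyp := hint i hi j hj hij hyij
    obtain ⟨xi, hxi_arc, hxi_pair, hxi_ne⟩ := other_endpoint (harc i hi) hyp.1
    obtain ⟨xj, hxj_arc, hxj_pair, hxj_ne⟩ := other_endpoint (harc j hj) hyp.2
    by_cases hsingle : A i ∩ A j = {y}
    · -- glue
      have hglue : IsArc (A i ∪ A j) xi xj := isArc_glue hxi_arc hxj_arc.symm hsingle
      set s' := s.erase j with hs'
      set A' := Function.update A i (A i ∪ A j) with hA'
      set E0 := Function.update e₀ i xi with hE0
      set E1 := Function.update e₁ i xj with hE1
      have his' : i ∈ s' := Finset.mem_erase.mpr ⟨hij, hi⟩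
      have harc' : ∀ l ∈ s', IsArc (A' l) (E0 l) (E1 l) := by
        intro l hl
        by_cases hli : l = i
        · subst hli
          simp only [hA', hE0, hE1, Function.update_self]
          exact hglue
        · simp only [hA', hE0, hE1, Function.update_of_ne hli]
          exact harc l (Finset.mem_of_mem_erase hl)
      have hcov' : (⋃ l ∈ s', A' l) = Set.univ := by
        rw [Set.eq_univ_iff_forall]
        intro x
        have hx : x ∈ ⋃ l ∈ s, A l := by rw [hcov]; trivial
        simp only [Set.mem_iUnion, exists_prop] at hx ⊢
        obtain ⟨l, hl, hxl⟩ := hx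
        by_cases hli : l = i
        · exact ⟨i, his', by
            simp only [hA', Function.update_self]; exact Or.inl (hli ▸ hxl)⟩
        · by_cases hlj : l = j
          · exact ⟨i, his', by
              simp only [hA', Function.update_self]; exact Or.inr (hlj ▸ hxl)⟩
          · exact ⟨l, Finset.mem_erase.mpr ⟨hlj, hl⟩, by
              simp only [hA', Function.update_of_ne hli]; exact hxl⟩
      have hkey : ∀ b ∈ s', b ≠ i →
          (A i ∪ A j) ∩ A b ⊆ ({xi, xj} : Set X) ∩ {e₀ b, e₁ b} := by
        intro b hb hbi
        have hbs : b ∈ s := Finset.mem_of_mem_erase hb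
        have hbj : b ≠ j := (Finset.mem_erase.mp hb).1
        rintro w ⟨hw1 | hw1, hw2⟩
        · have := hint i hi b hbs (Ne.symm hbi) ⟨hw1, hw2⟩
          rw [hxi_pair] at this
          rcases this.1 with rfl | hwy
          · exact ⟨Set.mem_insert _ _, this.2⟩
          · rw [mem_singleton_iff] at hwy; subst hwy
            rcases hyonly b hbs hw2 with h' | h'
            · exact absurd h' hbi
            · exact absurd h' hbj
        · have := hint j hj b hbs (Ne.symm hbj) ⟨hw1, hw2⟩
          rw [hxj_pair] at this
          rcases this.1 with rfl | hwy
          · exact ⟨Set.mem_insert_of_mem _ rfl, this.2⟩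
          · rw [mem_singleton_iff] at hwy; subst hwy
            rcases hyonly b hbs hw2 with h' | h'
            · exact absurd h' hbi
            · exact absurd h' hbj
      have hint' : ∀ a ∈ s', ∀ b ∈ s', a ≠ b →
          A' a ∩ A' b ⊆ ({E0 a, E1 a} : Set X) ∩ {E0 b, E1 b} := by
        intro a ha b hb hab
        by_cases hai : a = i
        · have hbi : b ≠ i := fun h => hab (h ▸ hai ▸ rfl)
          rw [hai]
          simp only [hA', hE0, hE1, Function.update_self, Function.update_of_ne hbi]
          exact hkey b hb hbi
        · by_cases hbi : b = i
          · rw [hbi]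
            simp only [hA', hE0, hE1, Function.update_self, Function.update_of_ne hai]
            intro w hw
            have := hkey a ha hai ⟨hw.2, hw.1⟩
            exact ⟨this.2, this.1⟩
          · simp only [hA', hE0, hE1, Function.update_of_ne hai, Function.update_of_ne hbi]
            exact hint a (Finset.mem_of_mem_erase ha) b (Finset.mem_of_mem_erase hb) hab
      have hcard' : s'.card = N - 1 := by
        rw [hs', Finset.card_erase_of_mem hj, hcard]
      exact IH (N-1) (by omega) s' A' E0 E1 hcard' harc' hcov' hint'
    · -- two arcs sharing two points: simple closed curve
      exfalso
      have hw : ∃ w, w ∈ A i ∩ A j ∧ w ≠ y := by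
        by_contra hq
        push_neg at hq
        apply hsingle
        apply subset_antisymm
        · intro w hw'
          rw [mem_singleton_iff]
          by_contra hne'
          exact hne' (hq w hw')
        · rintro w hw'
          rw [mem_singleton_iff] at hw'; subst hw'
          exact hyij
      obtain ⟨w, hw', hwy⟩ := hw
      have hwp := hint i hi j hj hij hw'
      have e1 : ({e₀ i, e₁ i} : Set X) = {w, y} := pair_eq hwy hwp.1 hyp.1
      have hai : IsArc (A i) w y := (harc i hi).orient hwp.1 hyp.1 hwy
      have haj : IsArc (A j) w y := (harc j hj).orient hwp.2 hyp.2 hwy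
      have hinter : A i ∩ A j = {w, y} := by
        apply subset_antisymm
        · intro v hv
          have := hint i hi j hj hij hv
          rw [e1] at this
          exact this.1
        · rintro v (rfl | hv)
          · exact hw'
          · rw [mem_singleton_iff] at hv; subst hv; exact hyij
      exact hT (circle_of_two_arcs hai haj hinter)

  · -- a branch point of order ≥ 3
    obtain ⟨p, i1, i2, hi1, hi2, hi12, hpmem⟩ := hpairx
    push_neg at H1
    obtain ⟨i3, hi3, hpi3, hi3ne⟩ := H1 p i1 i2 ⟨hi1, hi2, hi12, hpmem⟩
    obtain ⟨hi31, hi32⟩ := hi3ne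
    right
    have hp1 : p ∈ A i1 := hpmem.1
    have hp2 : p ∈ A i2 := hpmem.2
    set R := ARel A s p with hR
    set S₁ : Set (Fin n) := {l | l ∈ s ∧ Relation.ReflTransGen R i1 l} with hS₁
    set S₂ : Set (Fin n) := {l | l ∈ s ∧ Relation.ReflTransGen R i2 l} with hS₂
    have hi1S1 : i1 ∈ S₁ := ⟨hi1, Relation.ReflTransGen.refl⟩
    have hi2S2 : i2 ∈ S₂ := ⟨hi2, Relation.ReflTransGen.refl⟩
    have hS1fin : S₁.Finite := s.finite_toSet.subset (fun l hl => hl.1)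
    have hS2fin : S₂.Finite := s.finite_toSet.subset (fun l hl => hl.1)
    -- no two distinct p-arcs are linked off p
    have hnolink : ∀ a b : Fin n, a ∈ s → b ∈ s → a ≠ b → p ∈ A a → p ∈ A b →
        ¬ Relation.ReflTransGen R a b := fun a b ha hb hab hpa hpb =>
      no_rtg harc hint hT ha hb hab hpa hpb
    have F2 : ∀ l ∈ S₁, p ∈ A l → l = i1 := by
      intro l hl hpl
      by_contra hne'
      exact hnolink i1 l hi1 hl.1 (fun h => hne' h.symm) hp1 hpl hl.2
    have F2' : ∀ l ∈ S₂, p ∈ A l → l = i2 := by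
      intro l hl hpl
      by_contra hne'
      exact hnolink i2 l hi2 hl.1 (fun h => hne' h.symm) hp2 hpl hl.2
    have F1 : ∀ l ∈ S₁, ∀ l' ∈ s, l' ∉ S₁ → A l ∩ A l' ⊆ {p} := by
      intro l hl l' hl' hl'S w hw
      rw [mem_singleton_iff]
      by_contra hwp
      have hll' : l ≠ l' := fun h => hl'S (h ▸ hl)
      exact hl'S ⟨hl', hl.2.tail ⟨hl.1, hl', hll', ⟨w, hw, hwp⟩⟩⟩
    have F1' : ∀ l ∈ S₂, ∀ l' ∈ s, l' ∉ S₂ → A l ∩ A l' ⊆ {p} := by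
      intro l hl l' hl' hl'S w hw
      rw [mem_singleton_iff]
      by_contra hwp
      have hll' : l ≠ l' := fun h => hl'S (h ▸ hl)
      exact hl'S ⟨hl', hl.2.tail ⟨hl.1, hl', hll', ⟨w, hw, hwp⟩⟩⟩
    have hdisj12 : ∀ l, l ∈ S₁ → l ∈ S₂ → False := by
      intro l hl1 hl2
      exact hnolink i1 i2 hi1 hi2 hi12 hp1 hp2 (hl1.2.trans (rtg_symm hl2.2))
    have hi3S1 : i3 ∉ S₁ := fun h => hi31 (F2 i3 h hpi3)
    have hi3S2 : i3 ∉ S₂ := fun h => hi32 (F2' i3 h hpi3)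
    set T₁ : Set X := ⋃ l ∈ S₁, A l with hT₁
    set T₂ : Set X := ⋃ l ∈ S₂, A l with hT₂
    have hT₁cl : IsClosed T₁ :=
      Set.Finite.isClosed_biUnion hS1fin (fun l hl => (harc l hl.1).isClosed)
    have hT₂cl : IsClosed T₂ :=
      Set.Finite.isClosed_biUnion hS2fin (fun l hl => (harc l hl.1).isClosed)
    set W₁ : Set X := {p} ∪ ⋃ l ∈ ((↑s : Set (Fin n)) \ S₁), A l with hW₁
    set W₂ : Set X := {p} ∪ ⋃ l ∈ ((↑s : Set (Fin n)) \ S₂), A l with hW₂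
    have hW₁cl : IsClosed W₁ := isClosed_singleton.union
      (Set.Finite.isClosed_biUnion (s.finite_toSet.subset diff_subset)
        (fun l hl => (harc l hl.1).isClosed))
    have hW₂cl : IsClosed W₂ := isClosed_singleton.union
      (Set.Finite.isClosed_biUnion (s.finite_toSet.subset diff_subset)
        (fun l hl => (harc l hl.1).isClosed))
    have hD1eq : T₁ \ {p} = W₁ᶜ := by
      apply subset_antisymm
      · rintro x ⟨hx1, hx2⟩
        rw [mem_singleton_iff] at hx2
        simp only [hW₁, mem_compl_iff, mem_union, mem_singleton_iff, Set.mem_iUnion,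
          exists_prop, not_or, not_exists, not_and]
        refine ⟨hx2, ?_⟩
        rintro l' ⟨hl's, hl'S⟩ hxl'
        simp only [hT₁, Set.mem_iUnion, exists_prop] at hx1
        obtain ⟨l, hl, hxl⟩ := hx1
        exact hx2 (F1 l hl l' hl's hl'S ⟨hxl, hxl'⟩)
      · intro x hx
        simp only [hW₁, mem_compl_iff, mem_union, mem_singleton_iff, Set.mem_iUnion,
          exists_prop, not_or, not_exists, not_and] at hx
        obtain ⟨hxp, hxarcs⟩ := hx
        have : x ∈ ⋃ l ∈ s, A l := by rw [hcov]; trivial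
        simp only [Set.mem_iUnion, exists_prop] at this
        obtain ⟨l, hl, hxl⟩ := this
        by_cases hlS : l ∈ S₁
        · exact ⟨Set.mem_biUnion hlS hxl, by simpa using hxp⟩
        · exact absurd hxl (hxarcs l ⟨hl, hlS⟩)
    have hD2eq : T₂ \ {p} = W₂ᶜ := by
      apply subset_antisymm
      · rintro x ⟨hx1, hx2⟩
        rw [mem_singleton_iff] at hx2
        simp only [hW₂, mem_compl_iff, mem_union, mem_singleton_iff, Set.mem_iUnion,
          exists_prop, not_or, not_exists, not_and]
        refine ⟨hx2, ?_⟩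
        rintro l' ⟨hl's, hl'S⟩ hxl'
        simp only [hT₂, Set.mem_iUnion, exists_prop] at hx1
        obtain ⟨l, hl, hxl⟩ := hx1
        exact hx2 (F1' l hl l' hl's hl'S ⟨hxl, hxl'⟩)
      · intro x hx
        simp only [hW₂, mem_compl_iff, mem_union, mem_singleton_iff, Set.mem_iUnion,
          exists_prop, not_or, not_exists, not_and] at hx
        obtain ⟨hxp, hxarcs⟩ := hx
        have : x ∈ ⋃ l ∈ s, A l := by rw [hcov]; trivial
        simp only [Set.mem_iUnion, exists_prop] at this
        obtain ⟨l, hl, hxl⟩ := this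
        by_cases hlS : l ∈ S₂
        · exact ⟨Set.mem_biUnion hlS hxl, by simpa using hxp⟩
        · exact absurd hxl (hxarcs l ⟨hl, hlS⟩)
    set D₁ : Set X := T₁ \ {p} with hD₁
    set D₂ : Set X := T₂ \ {p} with hD₂
    set D₃ : Set X := ({p} ∪ T₁ ∪ T₂)ᶜ with hD₃
    have hD₁op : IsOpen D₁ := by rw [hD1eq]; exact hW₁cl.isOpen_compl
    have hD₂op : IsOpen D₂ := by rw [hD2eq]; exact hW₂cl.isOpen_compl
    have hD₃op : IsOpen D₃ := (isClosed_singleton.union hT₁cl |>.union hT₂cl).isOpen_compl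
    have hdisj : D₁ ∩ D₂ = ∅ := by
      rw [Set.eq_empty_iff_forall_notMem]
      rintro x ⟨⟨hx1, hxp⟩, ⟨hx2, -⟩⟩
      rw [mem_singleton_iff] at hxp
      simp only [hT₁, hT₂, Set.mem_iUnion, exists_prop] at hx1 hx2
      obtain ⟨l, hl, hxl⟩ := hx1
      obtain ⟨l', hl', hxl'⟩ := hx2
      have hl'S1 : l' ∉ S₁ := fun h => hdisj12 l' h hl'
      exact hxp (F1 l hl l' hl'.1 hl'S1 ⟨hxl, hxl'⟩)
    have hD13 : D₁ ∩ D₃ = ∅ := by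
      rw [Set.eq_empty_iff_forall_notMem]
      rintro x ⟨⟨hx1, -⟩, hx3⟩
      exact hx3 (Or.inl (Or.inr hx1))
    have hD23 : D₂ ∩ D₃ = ∅ := by
      rw [Set.eq_empty_iff_forall_notMem]
      rintro x ⟨⟨hx2, -⟩, hx3⟩
      exact hx3 (Or.inr hx2)
    have hA3T1 : ∀ x, x ∈ A i3 → x ≠ p → x ∉ T₁ := by
      intro x hx hxp hxT
      simp only [hT₁, Set.mem_iUnion, exists_prop] at hxT
      obtain ⟨l, hl, hxl⟩ := hxT
      exact hxp (F1 l hl i3 hi3 hi3S1 ⟨hxl, hx⟩)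
    have hA3T2 : ∀ x, x ∈ A i3 → x ≠ p → x ∉ T₂ := by
      intro x hx hxp hxT
      simp only [hT₂, Set.mem_iUnion, exists_prop] at hxT
      obtain ⟨l, hl, hxl⟩ := hxT
      exact hxp (F1' l hl i3 hi3 hi3S2 ⟨hxl, hx⟩)
    -- a parametrization of the first branch arc
    have hppair : p ∈ ({e₀ i1, e₁ i1} : Set X) := (hint i1 hi1 i2 hi2 hi12 hpmem).1
    obtain ⟨w₀, hw0arc, hw0pair, hw0ne⟩ := other_endpoint (harc i1 hi1) hppair
    obtain ⟨f, hf, hfr, hf0, hf1⟩ := hw0arc.symm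
    set half : Set X := f '' {t | (1/2 : ℝ) ≤ (t : ℝ)} with hhalf
    have hw0half : w₀ ∈ half := ⟨⟨1, by norm_num⟩, by norm_num, hf1⟩
    have hphalf : p ∉ half := by
      rintro ⟨t, ht, hft⟩
      have : t = ⟨0, by norm_num⟩ := hf.injective (hft.trans hf0.symm)
      rw [this] at ht
      norm_num at ht
    have hhalfsub : half ⊆ A i1 := by
      rintro x ⟨t, -, rfl⟩
      rw [← hfr]; exact mem_range_self _
    have hhalfcpt : IsCompact half :=
      ((isClosed_le continuous_const continuous_subtype_val).isCompact).image hf.continuous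
    have hhalfpre : IsPreconnected half := by
      apply IsPreconnected.image _ f hf.continuous.continuousOn
      apply preconn_iccsub (s := Set.Ici (1/2 : ℝ))
      have : Set.Ici (1/2:ℝ) ∩ Set.Icc 0 1 = Set.Icc (1/2) 1 := by
        ext z
        simp only [Set.mem_inter_iff, Set.mem_Ici, Set.mem_Icc]
        constructor
        · rintro ⟨h1, h2, h3⟩; exact ⟨h1, h3⟩
        · rintro ⟨h1, h2⟩; exact ⟨h1, by linarith, h2⟩
      rw [this]
      exact isPreconnected_Icc
    set B₀ : Set X := half ∪ ⋃ l ∈ (S₁ \ {i1} : Set (Fin n)), A l with hB₀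
    have hB₀T₁ : B₀ ⊆ T₁ := by
      rintro x (hx | hx)
      · exact Set.mem_biUnion hi1S1 (hhalfsub hx)
      · simp only [Set.mem_iUnion, exists_prop] at hx
        obtain ⟨l, hl, hxl⟩ := hx
        exact Set.mem_biUnion hl.1 hxl
    have hpB₀ : p ∉ B₀ := by
      rintro (hx | hx)
      · exact hphalf hx
      · simp only [Set.mem_iUnion, exists_prop] at hx
        obtain ⟨l, hl, hxl⟩ := hx
        exact hl.2 (F2 l hl.1 hxl)
    have hB₀cpt : IsCompact B₀ := hhalfcpt.union
      (Set.Finite.isCompact_biUnion (hS1fin.subset diff_subset)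
        (fun l hl => (harc l hl.1.1).isCompact))
    -- every arc of the first branch connects to w₀ inside B₀
    have hclaim : ∀ l, Relation.ReflTransGen R i1 l → l = i1 ∨
        ∃ S, S ⊆ B₀ ∧ IsPreconnected S ∧ A l ⊆ S ∧ w₀ ∈ S := by
      intro l h
      induction h with
      | refl => exact Or.inl rfl
      | @tail b c hab hbc ih =>
        by_cases hci : c = i1
        · exact Or.inl hci
        right
        have hcs : c ∈ s := hbc.2.1
        have hcS1 : c ∈ S₁ := ⟨hcs, hab.tail hbc⟩
        have hAcB : A c ⊆ B₀ := fun x hx =>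
          Or.inr (Set.mem_biUnion ⟨hcS1, by simpa using hci⟩ hx)
        obtain ⟨z, hz⟩ := hbc.2.2.2
        rcases ih with heq | ⟨S, hSB, hSpre, hSA, hSw⟩
        · have hz1 : z ∈ A i1 ∩ A c := ⟨heq ▸ hz.1.1, hz.1.2⟩
          have hzp : z ∈ ({e₀ i1, e₁ i1} : Set X) :=
            (hint i1 hi1 c hcs (fun h => hci h.symm) hz1).1
          rw [hw0pair] at hzp
          have hzw : z = w₀ := by
            rcases hzp with h' | h'
            · exact h'
            · rw [mem_singleton_iff] at h'
              exact absurd h' (by simpa using hz.2)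
          exact ⟨A c, hAcB, (harc c hcs).isPreconnected, subset_rfl, hzw ▸ hz1.2⟩
        · refine ⟨S ∪ A c, union_subset hSB hAcB, ?_, fun x hx => Or.inr hx, Or.inl hSw⟩
          exact IsPreconnected.union z (hSA hz.1.1) hz.1.2 hSpre (harc c hcs).isPreconnected
    have hSl : ∀ l ∈ (S₁ \ {i1} : Set (Fin n)),
        ∃ S, S ⊆ B₀ ∧ IsPreconnected S ∧ A l ⊆ S ∧ w₀ ∈ S := by
      intro l hl
      rcases hclaim l hl.1.2 with heq | hS
      · exact absurd heq (by simpa using hl.2)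
      · exact hS
    have hB₀pre : IsPreconnected B₀ := by
      choose! Sf hSf1 hSf2 hSf3 hSf4 using hSl
      have hBeq : B₀ = ⋃₀ (insert half ((fun l => Sf l) '' (S₁ \ {i1} : Set (Fin n)))) := by
        apply subset_antisymm
        · rintro x (hx | hx)
          · exact ⟨half, Set.mem_insert _ _, hx⟩
          · simp only [Set.mem_iUnion, exists_prop] at hx
            obtain ⟨l, hl, hxl⟩ := hx
            exact ⟨Sf l, Set.mem_insert_of_mem _ ⟨l, hl, rfl⟩, hSf3 l hl hxl⟩
        · rintro x ⟨S, hS, hxS⟩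
          rcases hS with rfl | ⟨l, hl, rfl⟩
          · exact Or.inl hxS
          · exact hSf1 l hl hxS
      rw [hBeq]
      apply isPreconnected_sUnion w₀
      · rintro S (rfl | ⟨l, hl, rfl⟩)
        · exact hw0half
        · exact hSf4 l hl
      · rintro S (rfl | ⟨l, hl, rfl⟩)
        · exact hhalfpre
        · exact hSf2 l hl
    -- the complement of B₀
    set low : Set X := f '' {t | (t : ℝ) < 1/2} with hlow
    have hplow : p ∈ low := ⟨⟨0, by norm_num⟩, by norm_num, hf0⟩
    have hlowpre : IsPreconnected low := by
      apply IsPreconnected.image _ f hf.continuous.continuousOn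
      apply preconn_iccsub (s := Set.Iio (1/2 : ℝ))
      have : Set.Iio (1/2:ℝ) ∩ Set.Icc 0 1 = Set.Ico 0 (1/2) := by
        ext z
        simp only [Set.mem_inter_iff, Set.mem_Iio, Set.mem_Icc, Set.mem_Ico]
        constructor
        · rintro ⟨h1, h2, h3⟩; exact ⟨h2, h1⟩
        · rintro ⟨h1, h2⟩; exact ⟨h2, h1, by linarith⟩
      rw [this]
      exact isPreconnected_Ico
    have hcompl : B₀ᶜ = W₁ ∪ low := by
      apply subset_antisymm
      · intro x hx
        by_cases hxW : x ∈ W₁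
        · exact Or.inl hxW
        · have hxp : x ≠ p := fun h => hxW (Or.inl (h ▸ rfl))
          have : x ∈ ⋃ l ∈ s, A l := by rw [hcov]; trivial
          simp only [Set.mem_iUnion, exists_prop] at this
          obtain ⟨l, hl, hxl⟩ := this
          have hlS1 : l ∈ S₁ := by
            by_contra hq
            exact hxW (Or.inr (Set.mem_biUnion ⟨hl, hq⟩ hxl))
          have hli1 : l = i1 := by
            by_contra hq
            exact hx (Or.inr (Set.mem_biUnion ⟨hlS1, by simpa using hq⟩ hxl))
          rw [hli1, ← hfr] at hxl
          obtain ⟨t, rfl⟩ := hxl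
          right
          refine ⟨t, ?_, rfl⟩
          show (t : ℝ) < 1/2
          by_contra hq
          push_neg at hq
          exact hx (Or.inl ⟨t, hq, rfl⟩)
      · rintro x (hx | hx)
        · intro hxB
          rcases hx with hx | hx
          · rw [mem_singleton_iff] at hx; subst hx
            exact hpB₀ hxB
          · simp only [Set.mem_iUnion, exists_prop] at hx
            obtain ⟨l', hl', hxl'⟩ := hx
            have hxT₁ : x ∈ T₁ := hB₀T₁ hxB
            simp only [hT₁, Set.mem_iUnion, exists_prop] at hxT₁
            obtain ⟨l, hl, hxl⟩ := hxT₁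
            have := F1 l hl l' hl'.1 hl'.2 ⟨hxl, hxl'⟩
            rw [mem_singleton_iff] at this
            subst this
            exact hpB₀ hxB
        · obtain ⟨t, ht, rfl⟩ := hx
          intro hxB
          rcases hxB with hxh | hxa
          · obtain ⟨t', ht', hft'⟩ := hxh
            have : t' = t := hf.injective hft'
            subst this
            simp only [Set.mem_setOf_eq] at ht ht'
            linarith
          · simp only [Set.mem_iUnion, exists_prop] at hxa
            obtain ⟨l, hl, hxl⟩ := hxa
            have hfA : f t ∈ A i1 := by rw [← hfr]; exact mem_range_self _
            have hli1 : i1 ≠ l := fun h => hl.2 (mem_singleton_iff.mpr h.symm)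
            have := (hint i1 hi1 l hl.1.1 hli1 ⟨hfA, hxl⟩).1
            rw [hw0pair] at this
            rcases this with h' | h'
            · rw [← hf1] at h'
              have : t = ⟨1, by norm_num⟩ := hf.injective h'
              rw [this] at ht
              simp only [Set.mem_setOf_eq] at ht
              norm_num at ht
            · rw [mem_singleton_iff] at h'
              rw [h'] at hxl
              exact hl.2 (by simpa using F2 l hl.1 hxl)
    -- W₁ is preconnected: every other branch reaches p
    have hF3 : ∀ l ∈ s, ∃ l₀, Relation.ReflTransGen R l l₀ ∧ l₀ ∈ s ∧ p ∈ A l₀ := by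
      intro l hls
      by_contra hq
      push_neg at hq
      refine not_sep (S := ⋃ c ∈ ({c | c ∈ s ∧ Relation.ReflTransGen R l c} : Set (Fin n)), A c)
        (T := {p} ∪ ⋃ c ∈ ((↑s : Set (Fin n)) \ {c | c ∈ s ∧ Relation.ReflTransGen R l c}), A c)
        ?_ ?_ ?_ ?_ ?_ ?_
      · exact Set.Finite.isClosed_biUnion (s.finite_toSet.subset (fun c hc => hc.1))
          (fun c hc => (harc c hc.1).isClosed)
      · exact isClosed_singleton.union
          (Set.Finite.isClosed_biUnion (s.finite_toSet.subset diff_subset)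
            (fun c hc => (harc c hc.1).isClosed))
      · rw [Set.eq_univ_iff_forall]
        intro x
        have : x ∈ ⋃ c ∈ s, A c := by rw [hcov]; trivial
        simp only [Set.mem_iUnion, exists_prop] at this
        obtain ⟨c, hc, hxc⟩ := this
        by_cases hcS : c ∈ {c | c ∈ s ∧ Relation.ReflTransGen R l c}
        · exact Or.inl (Set.mem_biUnion hcS hxc)
        · exact Or.inr (Or.inr (Set.mem_biUnion ⟨hc, hcS⟩ hxc))
      · rw [Set.eq_empty_iff_forall_notMem]
        rintro x ⟨hx1, hx2⟩
        simp only [Set.mem_iUnion, exists_prop] at hx1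
        obtain ⟨c, hc, hxc⟩ := hx1
        have hxp : x ≠ p := by
          rintro rfl
          exact hq c hc.2 hc.1 hxc
        rcases hx2 with hx2 | hx2
        · rw [mem_singleton_iff] at hx2
          exact hxp hx2
        · simp only [Set.mem_iUnion, exists_prop] at hx2
          obtain ⟨c', hc', hxc'⟩ := hx2
          have hcc' : c ≠ c' := fun h => hc'.2 (h ▸ hc)
          exact hc'.2 ⟨hc'.1, hc.2.tail ⟨hc.1, hc'.1, hcc', ⟨x, ⟨hxc, hxc'⟩, by simpa using hxp⟩⟩⟩
      · obtain ⟨w, hw⟩ := (harc l hls).nonempty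
        exact ⟨w, Set.mem_biUnion ⟨hls, Relation.ReflTransGen.refl⟩ hw⟩
      · exact ⟨p, Or.inl rfl⟩
    have hclaim2 : ∀ l₀, l₀ ∈ s → l₀ ∉ S₁ → p ∈ A l₀ → ∀ c, Relation.ReflTransGen R l₀ c →
        ∃ S, S ⊆ W₁ ∧ IsPreconnected S ∧ A c ⊆ S ∧ p ∈ S := by
      intro l₀ hl₀s hl₀S1 hpl₀ c h
      induction h with
      | refl =>
        exact ⟨A l₀, fun x hx => Or.inr (Set.mem_biUnion ⟨hl₀s, hl₀S1⟩ hx),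
          (harc l₀ hl₀s).isPreconnected, subset_rfl, hpl₀⟩
      | @tail b c' hab hbc ih =>
        obtain ⟨S, hSW, hSpre, hSA, hSp⟩ := ih
        have hc's : c' ∈ s := hbc.2.1
        have hc'S1 : c' ∉ S₁ := by
          intro hq
          exact hl₀S1 ⟨hl₀s, hq.2.trans (rtg_symm (hab.tail hbc))⟩
        obtain ⟨z, hz⟩ := hbc.2.2.2
        refine ⟨S ∪ A c', union_subset hSW
          (fun x hx => Or.inr (Set.mem_biUnion ⟨hc's, hc'S1⟩ hx)), ?_,
          fun x hx => Or.inr hx, Or.inl hSp⟩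
        exact IsPreconnected.union z (hSA hz.1.1) hz.1.2 hSpre (harc c' hc's).isPreconnected
    have hW₁arc : ∀ l ∈ ((↑s : Set (Fin n)) \ S₁),
        ∃ S, S ⊆ W₁ ∧ IsPreconnected S ∧ A l ⊆ S ∧ p ∈ S := by
      intro l hl
      obtain ⟨l₀, hrtg, hl₀s, hpl₀⟩ := hF3 l hl.1
      have hl₀S1 : l₀ ∉ S₁ := by
        intro hq
        exact hl.2 ⟨hl.1, hq.2.trans (rtg_symm hrtg)⟩
      exact hclaim2 l₀ hl₀s hl₀S1 hpl₀ l (rtg_symm hrtg)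
    have hW₁pre : IsPreconnected W₁ := by
      choose! Sg hSg1 hSg2 hSg3 hSg4 using hW₁arc
      have hWeq : W₁ = ⋃₀ (insert {p} ((fun l => Sg l) '' ((↑s : Set (Fin n)) \ S₁))) := by
        apply subset_antisymm
        · rintro x (hx | hx)
          · exact ⟨{p}, Set.mem_insert _ _, hx⟩
          · simp only [Set.mem_iUnion, exists_prop] at hx
            obtain ⟨l, hl, hxl⟩ := hx
            exact ⟨Sg l, Set.mem_insert_of_mem _ ⟨l, hl, rfl⟩, hSg3 l hl hxl⟩
        · rintro x ⟨S, hS, hxS⟩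
          rcases hS with rfl | ⟨l, hl, rfl⟩
          · exact Or.inl hxS
          · exact hSg1 l hl hxS
      rw [hWeq]
      apply isPreconnected_sUnion p
      · rintro S (rfl | ⟨l, hl, rfl⟩)
        · exact rfl
        · exact hSg4 l hl
      · rintro S (rfl | ⟨l, hl, rfl⟩)
        · exact isPreconnected_singleton
        · exact hSg2 l hl
    have hcomplpre : IsPreconnected (B₀ᶜ) := by
      rw [hcompl]
      exact IsPreconnected.union p (Or.inl rfl) hplow hW₁pre hlowpre
    set B : NonemptyCompacts X := ⟨⟨B₀, hB₀cpt⟩, ⟨w₀, Or.inl hw0half⟩⟩ with hB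
    have hBnc : B ∈ NCstar X := ⟨⟨⟨w₀, Or.inl hw0half⟩, hB₀pre⟩, hcomplpre⟩
    -- the three branches
    have hD₁ne : D₁.Nonempty := by
      obtain ⟨x, hx⟩ := ((harc i1 hi1).infinite.diff (Set.finite_singleton p)).nonempty
      exact ⟨x, Set.mem_biUnion hi1S1 hx.1, by simpa using hx.2⟩
    have hD₂ne : D₂.Nonempty := by
      obtain ⟨x, hx⟩ := ((harc i2 hi2).infinite.diff (Set.finite_singleton p)).nonempty
      exact ⟨x, Set.mem_biUnion hi2S2 hx.1, by simpa using hx.2⟩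
    have hD₃ne : D₃.Nonempty := by
      obtain ⟨x, hx⟩ := ((harc i3 hi3).infinite.diff (Set.finite_singleton p)).nonempty
      have hxp : x ≠ p := by simpa using hx.2
      refine ⟨x, ?_⟩
      simp only [hD₃, mem_compl_iff, mem_union, mem_singleton_iff, not_or]
      exact ⟨⟨hxp, hA3T1 x hx.1 hxp⟩, hA3T2 x hx.1 hxp⟩
    have hcovD : D₁ ∪ D₂ ∪ D₃ = {p}ᶜ := by
      apply subset_antisymm
      · rintro x ((hx | hx) | hx)
        · simp only [mem_compl_iff, mem_singleton_iff]
          exact fun h => (by simpa using hx.2 : x ≠ p) h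
        · simp only [mem_compl_iff, mem_singleton_iff]
          exact fun h => (by simpa using hx.2 : x ≠ p) h
        · simp only [mem_compl_iff, mem_singleton_iff]
          intro h
          exact hx (Or.inl (Or.inl (by simpa using h)))
      · intro x hx
        simp only [mem_compl_iff, mem_singleton_iff] at hx
        by_cases hxT1 : x ∈ T₁
        · exact Or.inl (Or.inl ⟨hxT1, by simpa using hx⟩)
        · by_cases hxT2 : x ∈ T₂
          · exact Or.inl (Or.inr ⟨hxT2, by simpa using hx⟩)
          · refine Or.inr ?_
            simp only [hD₃, mem_compl_iff, mem_union, mem_singleton_iff, not_or]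
            exact ⟨⟨hx, hxT1⟩, hxT2⟩
    exact ncstar_disconnected3 p D₁ D₂ D₃ hD₁op hD₂op hD₃op hD₁ne hD₂ne hD₃ne
      hdisj hD13 hD23 hcovD B hBnc hpB₀

end Main
end ForwardDev

section Backward
variable [MetricSpace X] [CompactSpace X]

namespace NCback

variable (h : X ≃ₜ Set.Icc (0 : ℝ) 1)

noncomputable abbrev hv (x : X) : ℝ := (h x : ℝ)

lemma hv_cont : Continuous (hv h) := continuous_subtype_val.comp h.continuous

lemma hv_mem (x : X) : hv h x ∈ Set.Icc (0:ℝ) 1 := (h x).2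

lemma hv_inj : Function.Injective (hv h) := fun a b hab =>
  h.injective (Subtype.ext hab)

/-- the sublevel compact set -/
noncomputable def L (t : Set.Icc (0:ℝ) 1) : NonemptyCompacts X :=
  ⟨⟨{x | hv h x ≤ t}, (isClosed_le (hv_cont h) continuous_const).isCompact⟩,
    ⟨h.symm ⟨0, by norm_num⟩, by
      simp only [Set.mem_setOf_eq, hv]
      rw [h.apply_symm_apply]
      exact t.2.1⟩⟩

noncomputable def R (t : Set.Icc (0:ℝ) 1) : NonemptyCompacts X :=
  ⟨⟨{x | (t:ℝ) ≤ hv h x}, (isClosed_le continuous_const (hv_cont h)).isCompact⟩,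
    ⟨h.symm ⟨1, by norm_num⟩, by
      simp only [Set.mem_setOf_eq, hv]
      rw [h.apply_symm_apply]
      exact t.2.2⟩⟩

lemma L_coe (t : Set.Icc (0:ℝ) 1) : (L h t : Set X) = {x | hv h x ≤ t} := rfl
lemma R_coe (t : Set.Icc (0:ℝ) 1) : (R h t : Set X) = {x | (t:ℝ) ≤ hv h x} := rfl

lemma preconn_aux {s : Set ℝ} (hs : IsPreconnected (s ∩ Set.Icc 0 1)) :
    IsPreconnected {y : Set.Icc (0:ℝ) 1 | (y:ℝ) ∈ s} := by
  rw [← IsInducing.subtypeVal.isPreconnected_image]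
  convert hs using 1
  ext z
  simp only [Set.mem_image, Set.mem_setOf_eq, Set.mem_inter_iff]
  constructor
  · rintro ⟨⟨y, hy⟩, hys, rfl⟩; exact ⟨hys, hy⟩
  · rintro ⟨hzs, hz⟩; exact ⟨⟨z, hz⟩, hzs, rfl⟩

lemma preconn_preimage {s : Set ℝ} (hs : IsPreconnected (s ∩ Set.Icc 0 1)) :
    IsPreconnected {x : X | hv h x ∈ s} := by
  have : {x : X | hv h x ∈ s} = h.symm '' {y : Set.Icc (0:ℝ) 1 | (y:ℝ) ∈ s} := by
    ext x
    simp only [Set.mem_setOf_eq, Set.mem_image]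
    constructor
    · intro hx; exact ⟨h x, hx, h.symm_apply_apply x⟩
    · rintro ⟨y, hy, rfl⟩; simpa [hv] using hy
  rw [this]
  exact (preconn_aux hs).image _ h.symm.continuous.continuousOn

lemma L_mem_NCstar (t : Set.Icc (0:ℝ) 1) : L h t ∈ NCstar X := by
  constructor
  · refine ⟨(L h t).nonempty, ?_⟩
    have : (L h t : Set X) = {x : X | hv h x ∈ Set.Iic (t:ℝ)} := rfl
    rw [this]
    apply preconn_preimage
    have : Set.Iic (t:ℝ) ∩ Set.Icc 0 1 = Set.Icc 0 (t:ℝ) := by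
      ext z; simp only [Set.mem_inter_iff, Set.mem_Iic, Set.mem_Icc]
      constructor
      · rintro ⟨h1, h2, h3⟩; exact ⟨h2, h1⟩
      · rintro ⟨h1, h2⟩; exact ⟨h2, h1, le_trans h2 t.2.2⟩
    rw [this]; exact isPreconnected_Icc
  · have : ((L h t : Set X))ᶜ = {x : X | hv h x ∈ Set.Ioi (t:ℝ)} := by
      ext x; simp [L_coe, not_le]
    rw [this]
    apply preconn_preimage
    have : Set.Ioi (t:ℝ) ∩ Set.Icc 0 1 = Set.Ioc (t:ℝ) 1 := by
      ext z; simp only [Set.mem_inter_iff, Set.mem_Ioi, Set.mem_Icc, Set.mem_Ioc]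
      constructor
      · rintro ⟨h1, h2, h3⟩; exact ⟨h1, h3⟩
      · rintro ⟨h1, h2⟩; exact ⟨h1, le_trans (le_trans t.2.1 (le_of_lt h1)) le_rfl |>.trans (le_refl z) |>.trans le_rfl, h2⟩
    rw [this]; exact isPreconnected_Ioc
  
lemma R_mem_NCstar (t : Set.Icc (0:ℝ) 1) : R h t ∈ NCstar X := by
  constructor
  · refine ⟨(R h t).nonempty, ?_⟩
    have : (R h t : Set X) = {x : X | hv h x ∈ Set.Ici (t:ℝ)} := rfl
    rw [this]
    apply preconn_preimage
    have : Set.Ici (t:ℝ) ∩ Set.Icc 0 1 = Set.Icc (t:ℝ) 1 := by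
      ext z; simp only [Set.mem_inter_iff, Set.mem_Ici, Set.mem_Icc]
      constructor
      · rintro ⟨h1, h2, h3⟩; exact ⟨h1, h3⟩
      · rintro ⟨h1, h2⟩; exact ⟨h1, le_trans t.2.1 h1, h2⟩
    rw [this]; exact isPreconnected_Icc
  · have : ((R h t : Set X))ᶜ = {x : X | hv h x ∈ Set.Iio (t:ℝ)} := by
      ext x; simp [R_coe, not_le]
    rw [this]
    apply preconn_preimage
    have : Set.Iio (t:ℝ) ∩ Set.Icc 0 1 = Set.Ico 0 (t:ℝ) := by
      ext z; simp only [Set.mem_inter_iff, Set.mem_Iio, Set.mem_Icc, Set.mem_Ico]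
      constructor
      · rintro ⟨h1, h2, h3⟩; exact ⟨h2, h1⟩
      · rintro ⟨h1, h2⟩; exact ⟨h2, h1, le_trans (le_of_lt h2) t.2.2⟩
    rw [this]; exact isPreconnected_Ico

lemma L_continuous : Continuous (L h) := by
  rw [Metric.continuous_iff]
  intro b ε hε
  have hu : UniformContinuous (h.symm : Set.Icc (0:ℝ) 1 → X) :=
    CompactSpace.uniformContinuous_of_continuous h.symm.continuous
  rw [Metric.uniformContinuous_iff] at hu
  obtain ⟨δ, hδ, hδ'⟩ := hu (ε/2) (by linarith)
  refine ⟨δ, hδ, fun a hab => ?_⟩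
  have key : ∀ u v : Set.Icc (0:ℝ) 1, dist u v < δ →
      ∀ x ∈ (L h u : Set X), ∃ y ∈ (L h v : Set X), dist x y ≤ ε/2 := by
    intro u v huv x hx
    by_cases hxv : hv h x ≤ v
    · exact ⟨x, hxv, by rw [dist_self]; linarith⟩
    · push_neg at hxv
      refine ⟨h.symm v, by simp [L_coe, hv], ?_⟩
      have hx' : x = h.symm (h x) := (h.symm_apply_apply x).symm
      rw [hx']
      apply le_of_lt
      apply hδ'
      have hd : dist (h x) v = |hv h x - (v:ℝ)| := rfl
      rw [Subtype.dist_eq]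
      have h1 : (v:ℝ) < hv h x := hxv
      have h2 : hv h x ≤ u := hx
      have h3 : dist (u:ℝ) (v:ℝ) < δ := huv
      rw [Real.dist_eq] at h3 ⊢
      have : |(hv h x) - (v:ℝ)| ≤ |(u:ℝ) - (v:ℝ)| := by
        rw [abs_sub_comm ((u:ℝ)) _] at h3
        rw [abs_of_pos (by linarith), abs_of_pos (by linarith)] <;> try linarith
      calc |(hv h x) - (v:ℝ)| ≤ |(u:ℝ) - (v:ℝ)| := this
        _ < δ := h3
  have hne : EMetric.hausdorffEdist (L h a : Set X) (L h b : Set X) ≠ ⊤ :=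
    Metric.hausdorffEdist_ne_top_of_nonempty_of_bounded (L h a).nonempty (L h b).nonempty
      (L h a).isCompact.isBounded (L h b).isCompact.isBounded
  have : dist (L h a) (L h b) ≤ ε/2 := by
    rw [NonemptyCompacts.dist_eq]
    apply Metric.hausdorffDist_le_of_mem_dist (by linarith)
    · exact key a b hab
    · exact key b a (by rwa [dist_comm])
  linarith

lemma R_continuous : Continuous (R h) := by
  rw [Metric.continuous_iff]
  intro b ε hε
  have hu : UniformContinuous (h.symm : Set.Icc (0:ℝ) 1 → X) :=
    CompactSpace.uniformContinuous_of_continuous h.symm.continuous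
  rw [Metric.uniformContinuous_iff] at hu
  obtain ⟨δ, hδ, hδ'⟩ := hu (ε/2) (by linarith)
  refine ⟨δ, hδ, fun a hab => ?_⟩
  have key : ∀ u v : Set.Icc (0:ℝ) 1, dist u v < δ →
      ∀ x ∈ (R h u : Set X), ∃ y ∈ (R h v : Set X), dist x y ≤ ε/2 := by
    intro u v huv x hx
    by_cases hxv : (v:ℝ) ≤ hv h x
    · exact ⟨x, hxv, by rw [dist_self]; linarith⟩
    · push_neg at hxv
      refine ⟨h.symm v, by simp [R_coe, hv], ?_⟩
      have hx' : x = h.symm (h x) := (h.symm_apply_apply x).symm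
      rw [hx']
      apply le_of_lt
      apply hδ'
      rw [Subtype.dist_eq]
      have h2 : (u:ℝ) ≤ hv h x := hx
      have h3 : dist (u:ℝ) (v:ℝ) < δ := huv
      rw [Real.dist_eq] at h3 ⊢
      have : |(hv h x) - (v:ℝ)| ≤ |(u:ℝ) - (v:ℝ)| := by
        rw [abs_of_neg (by linarith), abs_of_neg (by linarith)] <;> try linarith
      linarith
  have : dist (R h a) (R h b) ≤ ε/2 := by
    rw [NonemptyCompacts.dist_eq]
    apply Metric.hausdorffDist_le_of_mem_dist (by linarith)
    · exact key a b hab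
    · exact key b a (by rwa [dist_comm])
  linarith

lemma NCstar_eq : NCstar X = Set.range (L h) ∪ Set.range (R h) := by
  apply Set.Subset.antisymm
  · rintro A ⟨hA1, hA2⟩
    set s : Set ℝ := hv h '' (A : Set X) with hs
    have hsc : IsCompact s := (A.isCompact.image (hv_cont h))
    have hscon : IsConnected s := hA1.image _ (hv_cont h).continuousOn
    have hsne : s.Nonempty := hscon.nonempty
    have hIcc : s = Set.Icc (sInf s) (sSup s) := eq_Icc_of_connected_compact hscon hsc
    set a := sInf s
    set b := sSup s
    have hab : a ≤ b := by
      obtain ⟨z, hz⟩ := hsne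
      exact le_trans (csInf_le hsc.bddBelow hz) (le_csSup hsc.bddAbove hz)
    have hs01 : s ⊆ Set.Icc 0 1 := by
      rintro z ⟨x, hx, rfl⟩; exact hv_mem h x
    have ha0 : 0 ≤ a := le_csInf hsne fun z hz => (hs01 hz).1
    have hb1 : b ≤ 1 := csSup_le hsne fun z hz => (hs01 hz).2
    have hmem : ∀ x : X, x ∈ (A : Set X) ↔ hv h x ∈ s := by
      intro x
      constructor
      · intro hx; exact ⟨x, hx, rfl⟩
      · rintro ⟨y, hy, hyx⟩
        have : y = x := hv_inj h hyx
        rwa [← this]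
    have hcase : a = 0 ∨ b = 1 := by
      by_contra hcon
      push_neg at hcon
      obtain ⟨ha, hb⟩ := hcon
      have ha' : 0 < a := lt_of_le_of_ne ha0 (Ne.symm ha)
      have hb' : b < 1 := lt_of_le_of_ne hb1 hb
      -- complement is not preconnected
      set u : Set X := {x | hv h x < a}
      set v : Set X := {x | b < hv h x}
      have hu : IsOpen u := isOpen_lt (hv_cont h) continuous_const
      have hvo : IsOpen v := isOpen_lt continuous_const (hv_cont h)
      have hsub : ((A : Set X))ᶜ ⊆ u ∪ v := by
        intro x hx
        by_contra hx'
        simp only [Set.mem_union, Set.mem_setOf_eq, not_or, not_lt, u, v] at hx'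
        apply hx
        rw [hmem, hIcc]
        exact ⟨hx'.1, hx'.2⟩
      have h0A : h.symm ⟨0, by norm_num⟩ ∈ ((A : Set X))ᶜ ∩ u := by
        constructor
        · rw [Set.mem_compl_iff, hmem, hIcc]
          intro hmem'
          have : a ≤ hv h (h.symm ⟨0, by norm_num⟩) := hmem'.1
          rw [show hv h (h.symm ⟨0, by norm_num⟩) = 0 by simp [hv]] at this
          linarith
        · show hv h _ < a
          rw [show hv h (h.symm ⟨0, by norm_num⟩) = 0 by simp [hv]]
          exact ha'
      have h1A : h.symm ⟨1, by norm_num⟩ ∈ ((A : Set X))ᶜ ∩ v := by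
        constructor
        · rw [Set.mem_compl_iff, hmem, hIcc]
          intro hmem'
          have : hv h (h.symm ⟨1, by norm_num⟩) ≤ b := hmem'.2
          rw [show hv h (h.symm ⟨1, by norm_num⟩) = 1 by simp [hv]] at this
          linarith
        · show b < hv h _
          rw [show hv h (h.symm ⟨1, by norm_num⟩) = 1 by simp [hv]]
          exact hb'
      obtain ⟨x, hx⟩ := hA2 u v hu hvo hsub ⟨_, h0A⟩ ⟨_, h1A⟩
      have : hv h x < a ∧ b < hv h x := ⟨hx.2.1, hx.2.2⟩
      linarith
    rcases hcase with hc | hc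
    · left
      refine ⟨⟨b, ha0.trans hab, hb1⟩, ?_⟩
      apply NonemptyCompacts.ext
      have : (L h ⟨b, ha0.trans hab, hb1⟩ : Set X) = {x | hv h x ≤ b} := rfl
      rw [this]
      ext x
      rw [Set.mem_setOf_eq, hmem x, hIcc]
      simp only [Set.mem_Icc]
      constructor
      · intro hle; exact ⟨hc ▸ (hv_mem h x).1, hle⟩
      · rintro ⟨_, h2⟩; exact h2
    · right
      refine ⟨⟨a, ha0, hab.trans hb1⟩, ?_⟩
      apply NonemptyCompacts.ext
      have : (R h ⟨a, ha0, hab.trans hb1⟩ : Set X) = {x | a ≤ hv h x} := rfl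
      rw [this]
      ext x
      rw [Set.mem_setOf_eq, hmem x, hIcc]
      simp only [Set.mem_Icc]
      constructor
      · intro hle; exact ⟨hle, hc ▸ (hv_mem h x).2⟩
      · rintro ⟨h1, _⟩; exact h1
  · rintro A (⟨t, rfl⟩ | ⟨t, rfl⟩)
    · exact L_mem_NCstar h t
    · exact R_mem_NCstar h t

include h in
lemma backward : IsConnected (NCstar X) := by
  haveI : Nonempty (Set.Icc (0:ℝ) 1) := ⟨⟨0, by norm_num⟩⟩
  rw [NCstar_eq h]
  have hLR : L h ⟨1, by norm_num⟩ = R h ⟨0, by norm_num⟩ := by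
    apply NonemptyCompacts.ext; ext x
    simp only [L_coe, R_coe, Set.mem_setOf_eq]
    exact ⟨fun _ => (hv_mem h x).1, fun _ => (hv_mem h x).2⟩
  apply IsConnected.union
  · exact ⟨L h ⟨1, by norm_num⟩, ⟨⟨1, by norm_num⟩, rfl⟩, ⟨⟨0, by norm_num⟩, hLR.symm⟩⟩
  · exact isConnected_range (L_continuous h)
  · exact isConnected_range (R_continuous h)

end NCback
end Backward

theorem NCstar_connected_iff_interval [MetricSpace X] [CompactSpace X] [ConnectedSpace X] [Nontrivial X]
    (hG : IsFiniteGraph X) (hT : NoSimpleClosedCurve X) :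
    IsConnected (NCstar X) ↔ Nonempty (X ≃ₜ Set.Icc (0 : ℝ) 1) := by
  constructor
  · intro hcon
    obtain ⟨n, A, e₀, e₁, harc, hcov, hint⟩ := hG
    have hcov' : (⋃ i ∈ (Finset.univ : Finset (Fin n)), A i) = Set.univ := by
      rw [← hcov]
      simp
    have := forward_main hT (Finset.univ.card) (Finset.univ : Finset (Fin n)) A e₀ e₁ rfl
      (fun i _ => harc i) hcov' (fun i _ j _ hij => hint i j hij)
    rcases this with h | hnc
    · exact h
    · exact absurd hcon hnc
  · rintro ⟨h⟩
    exact NCback.backward h
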